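/- arXiv:1802.06118 — 4 statements merged into one kernel-verified Lean document; each statement's English description precedes it below -/
import Mathlib

section
/- Let r : [τ̲, τ̄] → ℝ² be a C³ plane curve satisfying the standard setup. Then for all sufficiently small Δ > 0 there exist values k(Δ) ≤ K(Δ) such that the side [p_i^Δ, p_{i+1}^Δ] of the approximating polygon P^Δ carries an equilibrium point with respect to the origin if and only if k(Δ) ≤ i ≤ K(Δ); in particular the set of indices of sides carrying equilibrium points is an interval, and consequently r admits no irregular equilibrium sequence, i.e. no sequence of equilibrium points p_{i_k}^{Δ_k} of P^{Δ_k} with Δ_k → 0 and |i_k| → ∞. -/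
open Set Filter MeasureTheory
open scoped ENNReal Topology

noncomputable section

/-- The dot product of two plane vectors. -/
def dot2 (p q : ℝ × ℝ) : ℝ := p.1 * q.1 + p.2 * q.2

/-- The Euclidean norm of a plane vector. -/
def enorm2 (p : ℝ × ℝ) : ℝ := Real.sqrt (dot2 p p)

/-- `τ` is an equilibrium parameter of the curve `r` with respect to the point `q`:
the normal line of `r` at `r τ` passes through `q`, i.e. `⟨ṙ(τ), r(τ) − q⟩ = 0`. -/
def IsEquilib (r : ℝ → ℝ × ℝ) (q : ℝ × ℝ) (τ : ℝ) : Prop :=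
  dot2 (deriv r τ) (r τ - q) = 0

/-- The signed curvature of a parametrized plane curve. -/
def curv (r : ℝ → ℝ × ℝ) (τ : ℝ) : ℝ :=
  ((deriv r τ).1 * (deriv (deriv r) τ).2 - (deriv r τ).2 * (deriv (deriv r) τ).1) /
    enorm2 (deriv r τ) ^ 3

/-- The side `[p, q]` of an approximating polygon carries a (stable) equilibrium point
with respect to the origin: `⟨p, q − p⟩ < 0 < ⟨q, q − p⟩`. -/
def SideCarries (p q : ℝ × ℝ) : Prop :=
  dot2 p (q - p) < 0 ∧ 0 < dot2 q (q - p)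

/-- The vertex `p` (with neighbouring vertices `pPrev`, `pNext`) carries an (unstable)
equilibrium point with respect to the origin. -/
def VertexCarries (pPrev p pNext : ℝ × ℝ) : Prop :=
  0 < dot2 p (p - pPrev) ∧ 0 < dot2 p (p - pNext)

private lemma aux_mvt (f f' : ℝ → ℝ) {a b : ℝ} (hab : a < b)
    (hd : ∀ x, HasDerivAt f (f' x) x) :
    ∃ c ∈ Ioo a b, f b - f a = (b - a) * f' c := by
  obtain ⟨c, hc, h⟩ := exists_hasDerivAt_eq_slope f f' hab
    (fun x _ => (hd x).continuousAt.continuousWithinAt) (fun x _ => hd x)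
  refine ⟨c, hc, ?_⟩
  have hba : b - a ≠ 0 := by linarith
  rw [h]; field_simp

private lemma aux_lip (u u' : ℝ → ℝ) (hd : ∀ x, HasDerivAt u (u' x) x)
    (L lo hi : ℝ) (hL : ∀ x ∈ Icc lo hi, |u' x| ≤ L)
    {s t : ℝ} (hs : s ∈ Icc lo hi) (ht : t ∈ Icc lo hi) :
    |u t - u s| ≤ L * |t - s| := by
  rcases lt_trichotomy s t with h | h | h
  · obtain ⟨c, hc, he⟩ := aux_mvt u u' h hd
    have hcm : c ∈ Icc lo hi := ⟨le_trans hs.1 hc.1.le, le_trans hc.2.le ht.2⟩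
    rw [he, abs_mul, mul_comm L]
    exact mul_le_mul_of_nonneg_left (hL c hcm) (abs_nonneg _)
  · simp [h]
  · obtain ⟨c, hc, he⟩ := aux_mvt u u' h hd
    have hcm : c ∈ Icc lo hi := ⟨le_trans ht.1 hc.1.le, le_trans hc.2.le hs.2⟩
    have : |u t - u s| = |u s - u t| := abs_sub_comm _ _
    rw [this, he, abs_mul]
    have h3 : |s - t| = |t - s| := abs_sub_comm _ _
    rw [h3, mul_comm L]
    exact mul_le_mul_of_nonneg_left (hL c hcm) (abs_nonneg _)

private lemma aux_sqb (B Δ u : ℝ) (hu : |u| ≤ B) : (Δ*u)^2 ≤ Δ^2 * B^2 := by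
  have h := abs_le.mp hu
  calc (Δ*u)^2 = Δ^2 * u^2 := by ring
    _ ≤ Δ^2 * B^2 := mul_le_mul_of_nonneg_left (sq_le_sq' h.1 h.2) (sq_nonneg Δ)

private lemma aux_sign (f : ℝ → ℝ) (lo hi d : ℝ) (hlo : lo < 0) (hhi : 0 < hi)
    (hc : Continuous f) (hd : HasDerivAt f d 0) (hdpos : 0 < d) (hf0 : f 0 = 0)
    (hz : ∀ t ∈ Icc lo hi, f t = 0 → t = 0) :
    (∀ t, 0 < t → t ≤ hi → 0 < f t) ∧ (∀ t, lo ≤ t → t < 0 → f t < 0) := by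
  have hslope := hasDerivAt_iff_tendsto_slope.mp hd
  have hev : ∀ᶠ t in 𝓝[≠] (0:ℝ), 0 < slope f 0 t := hslope.eventually (eventually_gt_nhds hdpos)
  have hslope_eq : ∀ t : ℝ, slope f 0 t = f t / t := by
    intro t; simp [slope_def_field, hf0]
  -- a point on the right with f > 0
  have hright : ∃ t₀, t₀ ∈ Ioo 0 hi ∧ 0 < f t₀ := by
    have h1 : ∀ᶠ t in 𝓝[>] (0:ℝ), 0 < slope f 0 t :=
      hev.filter_mono (nhdsWithin_mono _ (fun x hx => ne_of_gt hx))
    have h2 : Ioo (0:ℝ) hi ∈ 𝓝[>] (0:ℝ) := Ioo_mem_nhdsGT_of_mem ⟨le_refl 0, hhi⟩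
    obtain ⟨t₀, hs, hm⟩ := (h1.and (eventually_of_mem h2 (fun x hx => hx))).exists
    refine ⟨t₀, hm, ?_⟩
    rw [hslope_eq] at hs
    rcases div_pos_iff.mp hs with ⟨h, _⟩ | ⟨_, h⟩
    · exact h
    · linarith [hm.1]
  -- a point on the left with f < 0
  have hleft : ∃ t₁, t₁ ∈ Ioo lo 0 ∧ f t₁ < 0 := by
    have h1 : ∀ᶠ t in 𝓝[<] (0:ℝ), 0 < slope f 0 t :=
      hev.filter_mono (nhdsWithin_mono _ (fun x hx => ne_of_lt hx))
    have h2 : Ioo lo (0:ℝ) ∈ 𝓝[<] (0:ℝ) := Ioo_mem_nhdsLT_of_mem ⟨hlo, le_refl 0⟩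
    obtain ⟨t₁, hs, hm⟩ := (h1.and (eventually_of_mem h2 (fun x hx => hx))).exists
    refine ⟨t₁, hm, ?_⟩
    rw [hslope_eq] at hs
    rcases div_pos_iff.mp hs with ⟨_, h⟩ | ⟨h, _⟩
    · linarith [hm.2]
    · exact h
  obtain ⟨t₀, ht₀m, ht₀⟩ := hright
  obtain ⟨t₁, ht₁m, ht₁⟩ := hleft
  constructor
  · intro t ht hthi
    by_contra hle
    push_neg at hle
    have htI : t ∈ Icc lo hi := ⟨by linarith, hthi⟩
    have hne : f t ≠ 0 := fun h => by linarith [hz t htI h]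
    have hlt : f t < 0 := lt_of_le_of_ne hle hne
    have hsub := intermediate_value_uIcc (a := t) (b := t₀) hc.continuousOn
    have h0 : (0:ℝ) ∈ uIcc (f t) (f t₀) := mem_uIcc.mpr (Or.inl ⟨hlt.le, ht₀.le⟩)
    obtain ⟨c, hcm, hfc⟩ := hsub h0
    rw [mem_uIcc] at hcm
    have hc0 : 0 < c := by rcases hcm with ⟨h1, _⟩ | ⟨h1, _⟩ <;> linarith [ht₀m.1]
    have hchi : c ≤ hi := by rcases hcm with ⟨_, h2⟩ | ⟨_, h2⟩ <;> linarith [ht₀m.2]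
    have := hz c ⟨by linarith, hchi⟩ hfc
    linarith
  · intro t htlo ht
    by_contra hle
    push_neg at hle
    have htI : t ∈ Icc lo hi := ⟨htlo, by linarith⟩
    have hne : f t ≠ 0 := fun h => by linarith [hz t htI h]
    have hgt : 0 < f t := lt_of_le_of_ne hle (Ne.symm hne)
    have hsub := intermediate_value_uIcc (a := t₁) (b := t) hc.continuousOn
    have h0 : (0:ℝ) ∈ uIcc (f t₁) (f t) := mem_uIcc.mpr (Or.inl ⟨ht₁.le, hgt.le⟩)
    obtain ⟨c, hcm, hfc⟩ := hsub h0
    rw [mem_uIcc] at hcm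
    have hc0 : c < 0 := by rcases hcm with ⟨_, h2⟩ | ⟨_, h2⟩ <;> linarith [ht₁m.2]
    have hclo : lo ≤ c := by rcases hcm with ⟨h1, _⟩ | ⟨h1, _⟩ <;> linarith [ht₁m.1]
    have := hz c ⟨hclo, by linarith⟩ hfc
    linarith

namespace AuxNIES
variable (r : ℝ → ℝ × ℝ)

def cX (t : ℝ) : ℝ := (r t).1
def cY (t : ℝ) : ℝ := (r t).2
def cX1 (t : ℝ) : ℝ := (deriv r t).1
def cY1 (t : ℝ) : ℝ := (deriv r t).2
def cX2 (t : ℝ) : ℝ := (deriv (deriv r) t).1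
def cY2 (t : ℝ) : ℝ := (deriv (deriv r) t).2
def cX3 (t : ℝ) : ℝ := (deriv (deriv (deriv r)) t).1
def cY3 (t : ℝ) : ℝ := (deriv (deriv (deriv r)) t).2

def cD (t : ℝ) : ℝ := cX r t * cX1 r t + cY r t * cY1 r t
def cD' (t : ℝ) : ℝ :=
  cX1 r t ^ 2 + cY1 r t ^ 2 + cX r t * cX2 r t + cY r t * cY2 r t

def Fs (Δ a : ℝ) : ℝ :=
  cX r a * (cX r (a + Δ) - cX r a) + cY r a * (cY r (a + Δ) - cY r a)
def Gs (Δ a : ℝ) : ℝ :=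
  cX r (a + Δ) * (cX r (a + Δ) - cX r a) + cY r (a + Δ) * (cY r (a + Δ) - cY r a)

lemma sideCarries_iff (Δ a : ℝ) :
    SideCarries (r a) (r (a + Δ)) ↔ Fs r Δ a < 0 ∧ 0 < Gs r Δ a := by
  simp [SideCarries, dot2, Fs, Gs, cX, cY, Prod.fst_sub, Prod.snd_sub]

-- Φ₀ = x'(0)² (1 + κρ)
lemma phi0_eq (ρ : ℝ) (hρ : 0 < ρ) (hm : r 0 = (0, ρ)) (hy : (deriv r 0).2 = 0)
    (hx0 : 0 < (deriv r 0).1) :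
    cD' r 0 = cX1 r 0 ^ 2 * (1 + curv r 0 * ρ) := by
  have hX0 : cX r 0 = 0 := by simp [cX, hm]
  have hY0 : cY r 0 = ρ := by simp [cY, hm]
  have hY10 : cY1 r 0 = 0 := hy
  have henorm : enorm2 (deriv r 0) = cX1 r 0 := by
    rw [enorm2, dot2]
    rw [show (deriv r 0).2 = 0 from hy]
    rw [mul_zero, add_zero, ← sq]
    exact Real.sqrt_sq hx0.le
  have hcurv : curv r 0 = cY2 r 0 / cX1 r 0 ^ 2 := by
    rw [curv, henorm, hy]
    have : cX1 r 0 ≠ 0 := ne_of_gt hx0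
    field_simp [cX1, cY2, cX2]
    ring_nf
    rfl
  rw [cD', hX0, hY0, hY10, hcurv]
  have : cX1 r 0 ≠ 0 := ne_of_gt hx0
  field_simp
  ring

-- IsEquilib at origin ↔ cD = 0
lemma isEquilib_iff (τ : ℝ) : IsEquilib r (0, 0) τ ↔ cD r τ = 0 := by
  have : r τ - ((0:ℝ), (0:ℝ)) = r τ := by
    have : ((0:ℝ), (0:ℝ)) = (0 : ℝ × ℝ) := rfl
    rw [this, sub_zero]
  rw [IsEquilib, this, dot2, cD, cX, cY, cX1, cY1]
  constructor <;> intro h <;> linarith [h]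


variable (hr : ContDiff ℝ 3 r)
include hr

lemma hr2 : ContDiff ℝ 2 (deriv r) := by
  have h' : ContDiff ℝ ((2:ℕ∞) + 1) r := by exact_mod_cast hr
  rw [contDiff_succ_iff_deriv] at h'
  exact_mod_cast h'.2.2

lemma hr1 : ContDiff ℝ 1 (deriv (deriv r)) := by
  have h' : ContDiff ℝ ((1:ℕ∞) + 1) (deriv r) := by exact_mod_cast hr2 r hr
  rw [contDiff_succ_iff_deriv] at h'
  exact_mod_cast h'.2.2

lemma hdr : ∀ t, HasDerivAt r (deriv r t) t := fun t =>
  ((hr.differentiable (by norm_num)) t).hasDerivAt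

lemma hdr2 : ∀ t, HasDerivAt (deriv r) (deriv (deriv r) t) t := fun t =>
  (((hr2 r hr).differentiable (by norm_num)) t).hasDerivAt

lemma hdr3 : ∀ t, HasDerivAt (deriv (deriv r)) (deriv (deriv (deriv r)) t) t := fun t =>
  (((hr1 r hr).differentiable (by norm_num)) t).hasDerivAt

lemma hdX : ∀ t, HasDerivAt (cX r) (cX1 r t) t := fun t => (hdr r hr t).fst
lemma hdY : ∀ t, HasDerivAt (cY r) (cY1 r t) t := fun t => (hdr r hr t).snd
lemma hdX1 : ∀ t, HasDerivAt (cX1 r) (cX2 r t) t := fun t => (hdr2 r hr t).fst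
lemma hdY1 : ∀ t, HasDerivAt (cY1 r) (cY2 r t) t := fun t => (hdr2 r hr t).snd
lemma hdX2 : ∀ t, HasDerivAt (cX2 r) (cX3 r t) t := fun t => (hdr3 r hr t).fst
lemma hdY2 : ∀ t, HasDerivAt (cY2 r) (cY3 r t) t := fun t => (hdr3 r hr t).snd

lemma hdD : ∀ t, HasDerivAt (cD r) (cD' r t) t := by
  intro t
  have h := ((hdX r hr t).mul (hdX1 r hr t)).add ((hdY r hr t).mul (hdY1 r hr t))
  refine h.congr_deriv ?_
  unfold cD' ; ring

lemma hdFs (Δ : ℝ) : ∀ a, HasDerivAt (Fs r Δ)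
    (cX1 r a * (cX r (a + Δ) - cX r a) + cX r a * (cX1 r (a + Δ) - cX1 r a)
      + (cY1 r a * (cY r (a + Δ) - cY r a) + cY r a * (cY1 r (a + Δ) - cY1 r a))) a := by
  intro a
  have hXs : HasDerivAt (fun a => cX r (a + Δ)) (cX1 r (a + Δ)) a := by
    have := (hdX r hr (a + Δ)).comp a ((hasDerivAt_id a).add_const Δ)
    simpa [Function.comp_def] using this
  have hYs : HasDerivAt (fun a => cY r (a + Δ)) (cY1 r (a + Δ)) a := by
    have := (hdY r hr (a + Δ)).comp a ((hasDerivAt_id a).add_const Δ)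
    simpa [Function.comp_def] using this
  have h := ((hdX r hr a).mul (hXs.sub (hdX r hr a))).add
    ((hdY r hr a).mul (hYs.sub (hdY r hr a)))
  exact h

lemma hdGs (Δ : ℝ) : ∀ a, HasDerivAt (Gs r Δ)
    (cX1 r (a + Δ) * (cX r (a + Δ) - cX r a) + cX r (a + Δ) * (cX1 r (a + Δ) - cX1 r a)
      + (cY1 r (a + Δ) * (cY r (a + Δ) - cY r a) + cY r (a + Δ) * (cY1 r (a + Δ) - cY1 r a))) a := by
  intro a
  have hXs : HasDerivAt (fun a => cX r (a + Δ)) (cX1 r (a + Δ)) a := by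
    have := (hdX r hr (a + Δ)).comp a ((hasDerivAt_id a).add_const Δ)
    simpa [Function.comp_def] using this
  have hYs : HasDerivAt (fun a => cY r (a + Δ)) (cY1 r (a + Δ)) a := by
    have := (hdY r hr (a + Δ)).comp a ((hasDerivAt_id a).add_const Δ)
    simpa [Function.comp_def] using this
  have h := (hXs.mul (hXs.sub (hdX r hr a))).add (hYs.mul (hYs.sub (hdY r hr a)))
  exact h

set_option maxHeartbeats 1000000 in
lemma key (τlo τhi ρ : ℝ) (hτlo : τlo < 0) (hτhi : 0 < τhi)
    (hρ : 0 < ρ) (hm : r 0 = (0, ρ))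
    (hx : ∀ τ ∈ Icc τlo τhi, 0 < (deriv r τ).1)
    (hy : (deriv r 0).2 = 0)
    (huniq : ∀ τ ∈ Icc τlo τhi, IsEquilib r (0, 0) τ → τ = 0)
    (hκ₂ : 1 + curv r 0 * ρ ≠ 0) :
    ∃ Δ0 > (0:ℝ), ∃ C > (0:ℝ), ∀ Δ, 0 < Δ → Δ ≤ Δ0 →
      (∀ a1 a2 a3, τlo ≤ a1 → a1 ≤ a2 → a2 ≤ a3 → a3 + Δ ≤ τhi →
        SideCarries (r a1) (r (a1 + Δ)) → SideCarries (r a3) (r (a3 + Δ)) →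
        SideCarries (r a2) (r (a2 + Δ))) ∧
      (∀ a, τlo ≤ a → a + Δ ≤ τhi → SideCarries (r a) (r (a + Δ)) → |a| ≤ C * Δ) := by
  have hIcc0 : (0:ℝ) ∈ Icc τlo τhi := ⟨hτlo.le, hτhi.le⟩
  have hx0 : 0 < (deriv r 0).1 := hx 0 hIcc0
  obtain ⟨sg, hsgcases, hΦ0pos⟩ : ∃ sg : ℝ, (sg = 1 ∨ sg = -1) ∧ 0 < sg * cD' r 0 := by
    by_cases h : 0 < 1 + curv r 0 * ρ
    · refine ⟨1, Or.inl rfl, ?_⟩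
      rw [phi0_eq r ρ hρ hm hy hx0]
      have h1 : 0 < cX1 r 0 := hx0
      have h2 := mul_pos (pow_pos h1 2) h
      linarith
    · refine ⟨-1, Or.inr rfl, ?_⟩
      rw [phi0_eq r ρ hρ hm hy hx0]
      have h2 : 1 + curv r 0 * ρ < 0 := lt_of_le_of_ne (not_lt.mp h) hκ₂
      have h1 : 0 < cX1 r 0 := hx0
      have h3 : 0 < cX1 r 0 ^ 2 * (-(1 + curv r 0 * ρ)) := mul_pos (pow_pos h1 2) (by linarith)
      linarith [h3]
  have hsgabs : ∀ z : ℝ, |sg * z| = |z| := by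
    intro z; rcases hsgcases with h | h <;> rw [h] <;> simp
  have hsgsq : sg * sg = 1 := by rcases hsgcases with h | h <;> rw [h] <;> norm_num
  -- D at 0, zeros of D
  have hD0 : cD r 0 = 0 := by
    rw [cD]
    have h1 : cX r 0 = 0 := by simp [cX, hm]
    have h2 : cY1 r 0 = 0 := hy
    rw [h1, h2]; ring
  have hDz : ∀ t ∈ Icc τlo τhi, sg * cD r t = 0 → t = 0 := by
    intro t ht h
    have hsgne : sg ≠ 0 := by rcases hsgcases with h' | h' <;> rw [h'] <;> norm_num
    have : cD r t = 0 := by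
      rcases mul_eq_zero.mp h with h' | h'
      · exact absurd h' hsgne
      · exact h'
    exact huniq t ht ((isEquilib_iff r t).mpr this)
  -- continuity
  have hcX : Continuous (cX r) := hr.continuous.fst
  have hcY : Continuous (cY r) := hr.continuous.snd
  have hcX1 : Continuous (cX1 r) := (hr.continuous_deriv (by norm_num)).fst
  have hcY1 : Continuous (cY1 r) := (hr.continuous_deriv (by norm_num)).snd
  have hcX2 : Continuous (cX2 r) := ((hr2 r hr).continuous_deriv (by norm_num)).fst
  have hcY2 : Continuous (cY2 r) := ((hr2 r hr).continuous_deriv (by norm_num)).snd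
  have hDcont : Continuous (cD r) := (hcX.mul hcX1).add (hcY.mul hcY1)
  have hD'cont : Continuous (cD' r) :=
    (((hcX1.pow 2).add (hcY1.pow 2)).add (hcX.mul hcX2)).add (hcY.mul hcY2)
  -- sign of D
  obtain ⟨hDpos, hDneg⟩ := aux_sign (fun t => sg * cD r t) τlo τhi (sg * cD' r 0)
    hτlo hτhi (continuous_const.mul hDcont) ((hdD r hr 0).const_mul sg) hΦ0pos
    (by show sg * cD r 0 = 0; rw [hD0]; ring) hDz

  -- global bounds
  obtain ⟨B, hB1le, hBall⟩ : ∃ B : ℝ, 1 ≤ B ∧ ∀ t ∈ Icc τlo τhi,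
      |cX r t| ≤ B ∧ |cY r t| ≤ B ∧ |cX1 r t| ≤ B ∧ |cY1 r t| ≤ B ∧
      |cX2 r t| ≤ B ∧ |cY2 r t| ≤ B ∧ |cX3 r t| ≤ B ∧ |cY3 r t| ≤ B := by
    obtain ⟨B0, hB0⟩ := isCompact_Icc.exists_bound_of_continuousOn
      (hr.continuous.continuousOn : ContinuousOn r (Icc τlo τhi))
    obtain ⟨B1, hB1⟩ := isCompact_Icc.exists_bound_of_continuousOn
      ((hr.continuous_deriv (by norm_num)).continuousOn : ContinuousOn (deriv r) (Icc τlo τhi))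
    obtain ⟨B2, hB2⟩ := isCompact_Icc.exists_bound_of_continuousOn
      (((hr2 r hr).continuous_deriv (by norm_num)).continuousOn :
        ContinuousOn (deriv (deriv r)) (Icc τlo τhi))
    obtain ⟨B3, hB3⟩ := isCompact_Icc.exists_bound_of_continuousOn
      (((hr1 r hr).continuous_deriv (le_refl 1)).continuousOn :
        ContinuousOn (deriv (deriv (deriv r))) (Icc τlo τhi))
    refine ⟨max (max (max B0 B1) (max B2 B3)) 1, le_max_right _ _, ?_⟩
    intro t ht
    have e0 : B0 ≤ max (max (max B0 B1) (max B2 B3)) 1 :=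
      le_trans (le_trans (le_max_left _ _) (le_max_left _ _)) (le_max_left _ _)
    have e1 : B1 ≤ max (max (max B0 B1) (max B2 B3)) 1 :=
      le_trans (le_trans (le_max_right _ _) (le_max_left _ _)) (le_max_left _ _)
    have e2 : B2 ≤ max (max (max B0 B1) (max B2 B3)) 1 :=
      le_trans (le_trans (le_max_left _ _) (le_max_right _ _)) (le_max_left _ _)
    have e3 : B3 ≤ max (max (max B0 B1) (max B2 B3)) 1 :=
      le_trans (le_trans (le_max_right _ _) (le_max_right _ _)) (le_max_left _ _)
    refine ⟨?_, ?_, ?_, ?_, ?_, ?_, ?_, ?_⟩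
    · calc |cX r t| ≤ ‖r t‖ := by rw [show |cX r t| = ‖(r t).1‖ from rfl]; exact norm_fst_le _
        _ ≤ B0 := hB0 t ht
        _ ≤ _ := e0
    · calc |cY r t| ≤ ‖r t‖ := by rw [show |cY r t| = ‖(r t).2‖ from rfl]; exact norm_snd_le _
        _ ≤ B0 := hB0 t ht
        _ ≤ _ := e0
    · calc |cX1 r t| ≤ ‖deriv r t‖ := by
            rw [show |cX1 r t| = ‖(deriv r t).1‖ from rfl]; exact norm_fst_le _
        _ ≤ B1 := hB1 t ht
        _ ≤ _ := e1
    · calc |cY1 r t| ≤ ‖deriv r t‖ := by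
            rw [show |cY1 r t| = ‖(deriv r t).2‖ from rfl]; exact norm_snd_le _
        _ ≤ B1 := hB1 t ht
        _ ≤ _ := e1
    · calc |cX2 r t| ≤ ‖deriv (deriv r) t‖ := by
            rw [show |cX2 r t| = ‖(deriv (deriv r) t).1‖ from rfl]; exact norm_fst_le _
        _ ≤ B2 := hB2 t ht
        _ ≤ _ := e2
    · calc |cY2 r t| ≤ ‖deriv (deriv r) t‖ := by
            rw [show |cY2 r t| = ‖(deriv (deriv r) t).2‖ from rfl]; exact norm_snd_le _
        _ ≤ B2 := hB2 t ht
        _ ≤ _ := e2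
    · calc |cX3 r t| ≤ ‖deriv (deriv (deriv r)) t‖ := by
            rw [show |cX3 r t| = ‖(deriv (deriv (deriv r)) t).1‖ from rfl]; exact norm_fst_le _
        _ ≤ B3 := hB3 t ht
        _ ≤ _ := e3
    · calc |cY3 r t| ≤ ‖deriv (deriv (deriv r)) t‖ := by
            rw [show |cY3 r t| = ‖(deriv (deriv (deriv r)) t).2‖ from rfl]; exact norm_snd_le _
        _ ≤ B3 := hB3 t ht
        _ ≤ _ := e3
  have hBpos : (0:ℝ) < B := by linarith
  have hbX : ∀ t ∈ Icc τlo τhi, |cX r t| ≤ B := fun t ht => (hBall t ht).1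
  have hbY : ∀ t ∈ Icc τlo τhi, |cY r t| ≤ B := fun t ht => (hBall t ht).2.1
  have hbX1 : ∀ t ∈ Icc τlo τhi, |cX1 r t| ≤ B := fun t ht => (hBall t ht).2.2.1
  have hbY1 : ∀ t ∈ Icc τlo τhi, |cY1 r t| ≤ B := fun t ht => (hBall t ht).2.2.2.1
  have hbX2 : ∀ t ∈ Icc τlo τhi, |cX2 r t| ≤ B := fun t ht => (hBall t ht).2.2.2.2.1
  have hbY2 : ∀ t ∈ Icc τlo τhi, |cY2 r t| ≤ B := fun t ht => (hBall t ht).2.2.2.2.2.1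
  have hbX3 : ∀ t ∈ Icc τlo τhi, |cX3 r t| ≤ B := fun t ht => (hBall t ht).2.2.2.2.2.2.1
  have hbY3 : ∀ t ∈ Icc τlo τhi, |cY3 r t| ≤ B := fun t ht => (hBall t ht).2.2.2.2.2.2.2
  -- Lipschitz bounds
  have lipX1 : ∀ u v : ℝ, u ∈ Icc τlo τhi → v ∈ Icc τlo τhi → |cX1 r v - cX1 r u| ≤ B * |v - u| :=
    fun u v hu hv => aux_lip (cX1 r) (cX2 r) (hdX1 r hr) B τlo τhi hbX2 hu hv
  have lipY1 : ∀ u v : ℝ, u ∈ Icc τlo τhi → v ∈ Icc τlo τhi → |cY1 r v - cY1 r u| ≤ B * |v - u| :=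
    fun u v hu hv => aux_lip (cY1 r) (cY2 r) (hdY1 r hr) B τlo τhi hbY2 hu hv
  have lipX2 : ∀ u v : ℝ, u ∈ Icc τlo τhi → v ∈ Icc τlo τhi → |cX2 r v - cX2 r u| ≤ B * |v - u| :=
    fun u v hu hv => aux_lip (cX2 r) (cX3 r) (hdX2 r hr) B τlo τhi hbX3 hu hv
  have lipY2 : ∀ u v : ℝ, u ∈ Icc τlo τhi → v ∈ Icc τlo τhi → |cY2 r v - cY2 r u| ≤ B * |v - u| :=
    fun u v hu hv => aux_lip (cY2 r) (cY3 r) (hdY2 r hr) B τlo τhi hbY3 hu hv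
  -- P
  obtain ⟨P, hPdef, hPpos⟩ : ∃ P : ℝ, P = sg * cD' r 0 ∧ 0 < P := ⟨_, rfl, hΦ0pos⟩
  -- δ2 from continuity of sg * cD' at 0
  obtain ⟨δ2, hδ2pos, hδ2τhi, hδ2τlo, hδ2⟩ :
      ∃ δ2 > (0:ℝ), δ2 ≤ τhi ∧ δ2 ≤ -τlo ∧ ∀ v : ℝ, |v| ≤ δ2 → P / 2 ≤ sg * cD' r v := by
    have hca : ContinuousAt (fun v => sg * cD' r v) 0 :=
      (continuous_const.mul hD'cont).continuousAt
    rw [Metric.continuousAt_iff] at hca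
    obtain ⟨δ', hδ'pos, hδ'⟩ := hca (P / 2) (by linarith)
    refine ⟨min (δ' / 2) (min τhi (-τlo)),
      lt_min (by linarith) (lt_min hτhi (by linarith)), ?_, ?_, ?_⟩
    · exact le_trans (min_le_right _ _) (min_le_left _ _)
    · exact le_trans (min_le_right _ _) (min_le_right _ _)
    · intro v hv
      have h1 : |v| < δ' := by
        have := le_trans hv (min_le_left _ _)
        linarith
      have h2 : dist v 0 < δ' := by rwa [Real.dist_eq, sub_zero]
      have h3 := hδ' h2
      rw [Real.dist_eq] at h3

      have h4 := abs_lt.mp h3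
      rw [hPdef]
      linarith [h4.1]
  obtain ⟨δ, hδpos, hδ2δ, hδhi, hδlo⟩ :
      ∃ δ : ℝ, 0 < δ ∧ 2 * δ ≤ δ2 ∧ δ ≤ τhi / 2 ∧ δ ≤ -τlo / 2 :=
    ⟨δ2 / 2, by positivity, by linarith, by linarith, by linarith⟩
  -- m : uniform bound away from 0
  obtain ⟨m, hmpos, hmlow, hmhigh⟩ :
      ∃ m > (0:ℝ), (∀ t ∈ Icc τlo (-(δ/2)), sg * cD r t ≤ -m) ∧
        (∀ t ∈ Icc (δ/2) τhi, m ≤ sg * cD r t) := by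
    have hne1 : (Icc (δ/2) τhi).Nonempty := ⟨τhi, by constructor <;> linarith⟩
    have hne2 : (Icc τlo (-(δ/2))).Nonempty := ⟨τlo, by constructor <;> linarith⟩
    obtain ⟨tp, htp, hminp⟩ := isCompact_Icc.exists_isMinOn hne1
      ((continuous_const.mul hDcont).continuousOn)
    obtain ⟨tm, htm, hmaxm⟩ := isCompact_Icc.exists_isMaxOn hne2
      ((continuous_const.mul hDcont).continuousOn)
    have hmp : 0 < sg * cD r tp := hDpos tp (by linarith [htp.1]) htp.2
    have hmm : sg * cD r tm < 0 := hDneg tm htm.1 (by linarith [htm.2])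
    refine ⟨min (sg * cD r tp) (-(sg * cD r tm)), lt_min hmp (by linarith), ?_, ?_⟩
    · intro t ht
      have h1 : sg * cD r t ≤ sg * cD r tm := hmaxm ht

      have h2 : min (sg * cD r tp) (-(sg * cD r tm)) ≤ -(sg * cD r tm) := min_le_right _ _
      linarith
    · intro t ht
      have h1 : sg * cD r tp ≤ sg * cD r t := hminp ht

      have h2 : min (sg * cD r tp) (-(sg * cD r tm)) ≤ sg * cD r tp := min_le_left _ _
      linarith
  -- the mesh bound and localization constant
  refine ⟨min (min (δ/2) (δ2/2)) (min (m/(4*B^2+1)) (P/(8*B^2+1))),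
    lt_min (lt_min (by linarith) (by linarith))
      (lt_min (div_pos hmpos (by positivity)) (div_pos hPpos (by positivity))),
    8*B^2/P, div_pos (by positivity) hPpos, ?_⟩
  intro Δ hΔpos hΔle
  have hΔδ : Δ ≤ δ/2 := le_trans hΔle (le_trans (min_le_left _ _) (min_le_left _ _))
  have hΔδ2 : Δ ≤ δ2/2 := le_trans hΔle (le_trans (min_le_left _ _) (min_le_right _ _))
  have hΔm : Δ ≤ m/(4*B^2+1) := le_trans hΔle (le_trans (min_le_right _ _) (min_le_left _ _))
  have hΔP : Δ ≤ P/(8*B^2+1) := le_trans hΔle (le_trans (min_le_right _ _) (min_le_right _ _))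
  have hΔm' : 4*B^2*Δ < m := by
    have h := (le_div_iff₀ (by positivity : (0:ℝ) < 4*B^2+1)).mp hΔm
    linarith [h, hΔpos]
  have hΔP' : 8*B^2*Δ < P := by
    have h := (le_div_iff₀ (by positivity : (0:ℝ) < 8*B^2+1)).mp hΔP
    linarith [h, hΔpos]
  -- membership helpers
  have hmemIcc : ∀ a : ℝ, τlo ≤ a → a + Δ ≤ τhi → ∀ w, a ≤ w → w ≤ a + Δ → w ∈ Icc τlo τhi :=
    fun a ha hab w h1 h2 => ⟨le_trans ha h1, le_trans h2 hab⟩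
  -- approximation of Fs and Gs by Δ·D
  have hFD : ∀ a, τlo ≤ a → a + Δ ≤ τhi →
      |Fs r Δ a - Δ * cD r a| ≤ 2*B^2*Δ^2 ∧ |Gs r Δ a - Δ * cD r (a+Δ)| ≤ 2*B^2*Δ^2 ∧
      Gs r Δ a - Fs r Δ a ≤ 2*B^2*Δ^2 := by
    intro a ha hab
    have haΔ : a < a + Δ := by linarith
    obtain ⟨ξ₁, hξ₁, he₁⟩ := aux_mvt (cX r) (cX1 r) haΔ (hdX r hr)
    obtain ⟨ξ₂, hξ₂, he₂⟩ := aux_mvt (cY r) (cY1 r) haΔ (hdY r hr)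
    have he₁' : cX r (a+Δ) - cX r a = Δ * cX1 r ξ₁ := by rw [he₁]; ring_nf
    have he₂' : cY r (a+Δ) - cY r a = Δ * cY1 r ξ₂ := by rw [he₂]; ring_nf
    have hξ₁I : ξ₁ ∈ Icc τlo τhi := hmemIcc a ha hab ξ₁ hξ₁.1.le hξ₁.2.le
    have hξ₂I : ξ₂ ∈ Icc τlo τhi := hmemIcc a ha hab ξ₂ hξ₂.1.le hξ₂.2.le
    have haI : a ∈ Icc τlo τhi := hmemIcc a ha hab a (le_refl _) haΔ.le
    have hbI : a + Δ ∈ Icc τlo τhi := hmemIcc a ha hab (a+Δ) haΔ.le (le_refl _)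
    have hl1 : |cX1 r ξ₁ - cX1 r a| ≤ B * Δ := by
      have h1 := lipX1 a ξ₁ haI hξ₁I
      have h2 : |ξ₁ - a| ≤ Δ := by
        rw [abs_of_pos (by linarith [hξ₁.1] : (0:ℝ) < ξ₁ - a)]; linarith [hξ₁.2]
      exact h1.trans (mul_le_mul_of_nonneg_left h2 hBpos.le)
    have hl2 : |cY1 r ξ₂ - cY1 r a| ≤ B * Δ := by
      have h1 := lipY1 a ξ₂ haI hξ₂I
      have h2 : |ξ₂ - a| ≤ Δ := by
        rw [abs_of_pos (by linarith [hξ₂.1] : (0:ℝ) < ξ₂ - a)]; linarith [hξ₂.2]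
      exact h1.trans (mul_le_mul_of_nonneg_left h2 hBpos.le)
    have hl1b : |cX1 r ξ₁ - cX1 r (a+Δ)| ≤ B * Δ := by
      have h1 := lipX1 (a+Δ) ξ₁ hbI hξ₁I
      have h2 : |ξ₁ - (a+Δ)| ≤ Δ := by
        rw [abs_of_neg (by linarith [hξ₁.2] : ξ₁ - (a+Δ) < 0)]; linarith [hξ₁.1]
      exact h1.trans (mul_le_mul_of_nonneg_left h2 hBpos.le)
    have hl2b : |cY1 r ξ₂ - cY1 r (a+Δ)| ≤ B * Δ := by
      have h1 := lipY1 (a+Δ) ξ₂ hbI hξ₂I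
      have h2 : |ξ₂ - (a+Δ)| ≤ Δ := by
        rw [abs_of_neg (by linarith [hξ₂.2] : ξ₂ - (a+Δ) < 0)]; linarith [hξ₂.1]
      exact h1.trans (mul_le_mul_of_nonneg_left h2 hBpos.le)
    have hXa := hbX a haI
    have hYa := hbY a haI
    have hXb := hbX (a+Δ) hbI
    have hYb := hbY (a+Δ) hbI
    have hX1ξ := hbX1 ξ₁ hξ₁I
    have hY1ξ := hbY1 ξ₂ hξ₂I
    refine ⟨?_, ?_, ?_⟩
    · have e : Fs r Δ a - Δ * cD r a
          = Δ * (cX r a * (cX1 r ξ₁ - cX1 r a) + cY r a * (cY1 r ξ₂ - cY1 r a)) := by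
        rw [Fs, cD, he₁', he₂']; ring
      rw [e, abs_mul, abs_of_pos hΔpos]
      have h5 : |cX r a * (cX1 r ξ₁ - cX1 r a) + cY r a * (cY1 r ξ₂ - cY1 r a)|
          ≤ |cX r a| * |cX1 r ξ₁ - cX1 r a| + |cY r a| * |cY1 r ξ₂ - cY1 r a| := by
        calc |cX r a * (cX1 r ξ₁ - cX1 r a) + cY r a * (cY1 r ξ₂ - cY1 r a)|
            ≤ |cX r a * (cX1 r ξ₁ - cX1 r a)| + |cY r a * (cY1 r ξ₂ - cY1 r a)| := abs_add_le _ _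
          _ = |cX r a| * |cX1 r ξ₁ - cX1 r a| + |cY r a| * |cY1 r ξ₂ - cY1 r a| := by
              rw [abs_mul, abs_mul]
      have h6 : |cX r a| * |cX1 r ξ₁ - cX1 r a| ≤ B*(B*Δ) :=
        mul_le_mul hXa hl1 (abs_nonneg _) hBpos.le
      have h7 : |cY r a| * |cY1 r ξ₂ - cY1 r a| ≤ B*(B*Δ) :=
        mul_le_mul hYa hl2 (abs_nonneg _) hBpos.le
      have h8 : |cX r a * (cX1 r ξ₁ - cX1 r a) + cY r a * (cY1 r ξ₂ - cY1 r a)|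
          ≤ 2*(B*(B*Δ)) := by linarith
      have h9 := mul_le_mul_of_nonneg_left h8 hΔpos.le
      linarith [h9]
    · have e : Gs r Δ a - Δ * cD r (a+Δ)
          = Δ * (cX r (a+Δ) * (cX1 r ξ₁ - cX1 r (a+Δ))
            + cY r (a+Δ) * (cY1 r ξ₂ - cY1 r (a+Δ))) := by
        rw [Gs, cD, he₁', he₂']; ring
      rw [e, abs_mul, abs_of_pos hΔpos]
      have h5 : |cX r (a+Δ) * (cX1 r ξ₁ - cX1 r (a+Δ)) + cY r (a+Δ) * (cY1 r ξ₂ - cY1 r (a+Δ))|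
          ≤ |cX r (a+Δ)| * |cX1 r ξ₁ - cX1 r (a+Δ)|
            + |cY r (a+Δ)| * |cY1 r ξ₂ - cY1 r (a+Δ)| := by
        calc |cX r (a+Δ) * (cX1 r ξ₁ - cX1 r (a+Δ)) + cY r (a+Δ) * (cY1 r ξ₂ - cY1 r (a+Δ))|
            ≤ |cX r (a+Δ) * (cX1 r ξ₁ - cX1 r (a+Δ))|
              + |cY r (a+Δ) * (cY1 r ξ₂ - cY1 r (a+Δ))| := abs_add_le _ _
          _ = |cX r (a+Δ)| * |cX1 r ξ₁ - cX1 r (a+Δ)|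
              + |cY r (a+Δ)| * |cY1 r ξ₂ - cY1 r (a+Δ)| := by rw [abs_mul, abs_mul]
      have h6 : |cX r (a+Δ)| * |cX1 r ξ₁ - cX1 r (a+Δ)| ≤ B*(B*Δ) :=
        mul_le_mul hXb hl1b (abs_nonneg _) hBpos.le
      have h7 : |cY r (a+Δ)| * |cY1 r ξ₂ - cY1 r (a+Δ)| ≤ B*(B*Δ) :=
        mul_le_mul hYb hl2b (abs_nonneg _) hBpos.le
      have h8 : |cX r (a+Δ) * (cX1 r ξ₁ - cX1 r (a+Δ)) + cY r (a+Δ) * (cY1 r ξ₂ - cY1 r (a+Δ))|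
          ≤ 2*(B*(B*Δ)) := by linarith
      have h9 := mul_le_mul_of_nonneg_left h8 hΔpos.le
      linarith [h9]
    · have e : Gs r Δ a - Fs r Δ a
          = (cX r (a+Δ) - cX r a)^2 + (cY r (a+Δ) - cY r a)^2 := by
        rw [Fs, Gs]; ring
      rw [e, he₁', he₂']
      have h1 : (Δ * cX1 r ξ₁)^2 ≤ Δ^2 * B^2 := aux_sqb B Δ _ hX1ξ
      have h2 : (Δ * cY1 r ξ₂)^2 ≤ Δ^2 * B^2 := aux_sqb B Δ _ hY1ξ
      linarith
  -- positivity of the Φ-expression near 0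
  have hPhiPos : ∀ v w₁ w₂ w₃ w₄ : ℝ, |v| ≤ δ2 → v ∈ Icc τlo τhi →
      w₁ ∈ Icc τlo τhi → w₂ ∈ Icc τlo τhi → w₃ ∈ Icc τlo τhi → w₄ ∈ Icc τlo τhi →
      |w₁ - v| ≤ Δ → |w₂ - v| ≤ Δ → |w₃ - v| ≤ Δ → |w₄ - v| ≤ Δ →
      0 < sg * (cX1 r v * cX1 r w₁ + cX r v * cX2 r w₃
        + cY1 r v * cY1 r w₂ + cY r v * cY2 r w₄) := by
    intro v w₁ w₂ w₃ w₄ hv hvI h1I h2I h3I h4I h1d h2d h3d h4d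
    have hD'v : P/2 ≤ sg * cD' r v := hδ2 v hv
    have key1 : |cX1 r w₁ - cX1 r v| ≤ B * Δ :=
      (lipX1 v w₁ hvI h1I).trans (mul_le_mul_of_nonneg_left h1d hBpos.le)
    have key2 : |cY1 r w₂ - cY1 r v| ≤ B * Δ :=
      (lipY1 v w₂ hvI h2I).trans (mul_le_mul_of_nonneg_left h2d hBpos.le)
    have key3 : |cX2 r w₃ - cX2 r v| ≤ B * Δ :=
      (lipX2 v w₃ hvI h3I).trans (mul_le_mul_of_nonneg_left h3d hBpos.le)
    have key4 : |cY2 r w₄ - cY2 r v| ≤ B * Δ :=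
      (lipY2 v w₄ hvI h4I).trans (mul_le_mul_of_nonneg_left h4d hBpos.le)
    have hA : |cX1 r v * (cX1 r w₁ - cX1 r v)| ≤ B*(B*Δ) := by
      rw [abs_mul]; exact mul_le_mul (hbX1 v hvI) key1 (abs_nonneg _) hBpos.le
    have hB' : |cX r v * (cX2 r w₃ - cX2 r v)| ≤ B*(B*Δ) := by
      rw [abs_mul]; exact mul_le_mul (hbX v hvI) key3 (abs_nonneg _) hBpos.le
    have hC : |cY1 r v * (cY1 r w₂ - cY1 r v)| ≤ B*(B*Δ) := by
      rw [abs_mul]; exact mul_le_mul (hbY1 v hvI) key2 (abs_nonneg _) hBpos.le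
    have hD' : |cY r v * (cY2 r w₄ - cY2 r v)| ≤ B*(B*Δ) := by
      rw [abs_mul]; exact mul_le_mul (hbY v hvI) key4 (abs_nonneg _) hBpos.le
    have hE : |cX1 r v * (cX1 r w₁ - cX1 r v) + cX r v * (cX2 r w₃ - cX2 r v)
        + cY1 r v * (cY1 r w₂ - cY1 r v) + cY r v * (cY2 r w₄ - cY2 r v)| ≤ 4*(B*(B*Δ)) := by
      have t1 := abs_add_le (cX1 r v * (cX1 r w₁ - cX1 r v) + cX r v * (cX2 r w₃ - cX2 r v)
        + cY1 r v * (cY1 r w₂ - cY1 r v)) (cY r v * (cY2 r w₄ - cY2 r v))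
      have t2 := abs_add_le (cX1 r v * (cX1 r w₁ - cX1 r v) + cX r v * (cX2 r w₃ - cX2 r v))
        (cY1 r v * (cY1 r w₂ - cY1 r v))
      have t3 := abs_add_le (cX1 r v * (cX1 r w₁ - cX1 r v)) (cX r v * (cX2 r w₃ - cX2 r v))
      linarith
    have hid : sg * (cX1 r v * cX1 r w₁ + cX r v * cX2 r w₃
        + cY1 r v * cY1 r w₂ + cY r v * cY2 r w₄)
        = sg * cD' r v + sg * (cX1 r v * (cX1 r w₁ - cX1 r v) + cX r v * (cX2 r w₃ - cX2 r v)
          + cY1 r v * (cY1 r w₂ - cY1 r v) + cY r v * (cY2 r w₄ - cY2 r v)) := by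
      rw [cD']; ring
    have hneg : -(4*(B*(B*Δ))) ≤ sg * (cX1 r v * (cX1 r w₁ - cX1 r v)
        + cX r v * (cX2 r w₃ - cX2 r v)
        + cY1 r v * (cY1 r w₂ - cY1 r v) + cY r v * (cY2 r w₄ - cY2 r v)) := by
      have h := neg_abs_le (sg * (cX1 r v * (cX1 r w₁ - cX1 r v) + cX r v * (cX2 r w₃ - cX2 r v)
        + cY1 r v * (cY1 r w₂ - cY1 r v) + cY r v * (cY2 r w₄ - cY2 r v)))
      rw [hsgabs] at h
      linarith
    rw [hid]
    have h42 : 4*(B*(B*Δ)) = 4*(B^2*Δ) := by ring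
    linarith [hD'v, hneg, hΔP', h42]
  -- strict monotonicity of sg·Fs and sg·Gs on [-δ, δ]
  have hshift : ∀ w : ℝ, Continuous (fun a : ℝ => a + w) :=
    fun w => continuous_id.add continuous_const
  have hmonoF : StrictMonoOn (fun a => sg * Fs r Δ a) (Icc (-δ) δ) := by
    have hcont : Continuous (fun a => sg * Fs r Δ a) := by
      apply continuous_const.mul
      exact (hcX.mul ((hcX.comp (hshift Δ)).sub hcX)).add
        (hcY.mul ((hcY.comp (hshift Δ)).sub hcY))
    apply strictMonoOn_of_deriv_pos (convex_Icc _ _) hcont.continuousOn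
    intro x hx
    rw [interior_Icc] at hx
    rw [((hdFs r hr Δ x).const_mul sg).deriv]
    have hxΔ : x < x + Δ := by linarith
    obtain ⟨ξ₁, hξ₁, he₁⟩ := aux_mvt (cX r) (cX1 r) hxΔ (hdX r hr)
    obtain ⟨ξ₂, hξ₂, he₂⟩ := aux_mvt (cY r) (cY1 r) hxΔ (hdY r hr)
    obtain ⟨η₁, hη₁, hf₁⟩ := aux_mvt (cX1 r) (cX2 r) hxΔ (hdX1 r hr)
    obtain ⟨η₂, hη₂, hf₂⟩ := aux_mvt (cY1 r) (cY2 r) hxΔ (hdY1 r hr)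
    have he₁' : cX r (x+Δ) - cX r x = Δ * cX1 r ξ₁ := by rw [he₁]; ring_nf
    have he₂' : cY r (x+Δ) - cY r x = Δ * cY1 r ξ₂ := by rw [he₂]; ring_nf
    have hf₁' : cX1 r (x+Δ) - cX1 r x = Δ * cX2 r η₁ := by rw [hf₁]; ring_nf
    have hf₂' : cY1 r (x+Δ) - cY1 r x = Δ * cY2 r η₂ := by rw [hf₂]; ring_nf
    have hxI : x ∈ Icc τlo τhi := ⟨by linarith [hx.1], by linarith [hx.2]⟩
    have hwI : ∀ w, x ≤ w → w ≤ x + Δ → w ∈ Icc τlo τhi := by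
      intro w hw1 hw2
      constructor
      · have := hx.1; linarith
      · have := hx.2; linarith
    have hvabs : |x| ≤ δ2 := abs_le.mpr ⟨by linarith [hx.1], by linarith [hx.2]⟩
    have hΦ := hPhiPos x ξ₁ ξ₂ η₁ η₂ hvabs hxI
      (hwI ξ₁ hξ₁.1.le hξ₁.2.le) (hwI ξ₂ hξ₂.1.le hξ₂.2.le)
      (hwI η₁ hη₁.1.le hη₁.2.le) (hwI η₂ hη₂.1.le hη₂.2.le)
      (by rw [abs_of_pos (by linarith [hξ₁.1] : (0:ℝ) < ξ₁ - x)]; linarith [hξ₁.2])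
      (by rw [abs_of_pos (by linarith [hξ₂.1] : (0:ℝ) < ξ₂ - x)]; linarith [hξ₂.2])
      (by rw [abs_of_pos (by linarith [hη₁.1] : (0:ℝ) < η₁ - x)]; linarith [hη₁.2])
      (by rw [abs_of_pos (by linarith [hη₂.1] : (0:ℝ) < η₂ - x)]; linarith [hη₂.2])
    rw [he₁', he₂', hf₁', hf₂']
    have heq : sg * (cX1 r x * (Δ * cX1 r ξ₁) + cX r x * (Δ * cX2 r η₁)
        + (cY1 r x * (Δ * cY1 r ξ₂) + cY r x * (Δ * cY2 r η₂)))
        = Δ * (sg * (cX1 r x * cX1 r ξ₁ + cX r x * cX2 r η₁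
          + cY1 r x * cY1 r ξ₂ + cY r x * cY2 r η₂)) := by ring
    rw [heq]
    exact mul_pos hΔpos hΦ
  have hmonoG : StrictMonoOn (fun a => sg * Gs r Δ a) (Icc (-δ) δ) := by
    have hcont : Continuous (fun a => sg * Gs r Δ a) := by
      apply continuous_const.mul
      exact ((hcX.comp (hshift Δ)).mul ((hcX.comp (hshift Δ)).sub hcX)).add
        ((hcY.comp (hshift Δ)).mul ((hcY.comp (hshift Δ)).sub hcY))
    apply strictMonoOn_of_deriv_pos (convex_Icc _ _) hcont.continuousOn
    intro x hx
    rw [interior_Icc] at hx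
    rw [((hdGs r hr Δ x).const_mul sg).deriv]
    have hxΔ : x < x + Δ := by linarith
    obtain ⟨ξ₁, hξ₁, he₁⟩ := aux_mvt (cX r) (cX1 r) hxΔ (hdX r hr)
    obtain ⟨ξ₂, hξ₂, he₂⟩ := aux_mvt (cY r) (cY1 r) hxΔ (hdY r hr)
    obtain ⟨η₁, hη₁, hf₁⟩ := aux_mvt (cX1 r) (cX2 r) hxΔ (hdX1 r hr)
    obtain ⟨η₂, hη₂, hf₂⟩ := aux_mvt (cY1 r) (cY2 r) hxΔ (hdY1 r hr)
    have he₁' : cX r (x+Δ) - cX r x = Δ * cX1 r ξ₁ := by rw [he₁]; ring_nf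
    have he₂' : cY r (x+Δ) - cY r x = Δ * cY1 r ξ₂ := by rw [he₂]; ring_nf
    have hf₁' : cX1 r (x+Δ) - cX1 r x = Δ * cX2 r η₁ := by rw [hf₁]; ring_nf
    have hf₂' : cY1 r (x+Δ) - cY1 r x = Δ * cY2 r η₂ := by rw [hf₂]; ring_nf
    have hbI : x + Δ ∈ Icc τlo τhi := ⟨by linarith [hx.1], by linarith [hx.2]⟩
    have hwI : ∀ w, x ≤ w → w ≤ x + Δ → w ∈ Icc τlo τhi := by
      intro w hw1 hw2
      constructor
      · have := hx.1; linarith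
      · have := hx.2; linarith
    have hvabs : |x + Δ| ≤ δ2 := abs_le.mpr ⟨by linarith [hx.1], by linarith [hx.2]⟩
    have hΦ := hPhiPos (x+Δ) ξ₁ ξ₂ η₁ η₂ hvabs hbI
      (hwI ξ₁ hξ₁.1.le hξ₁.2.le) (hwI ξ₂ hξ₂.1.le hξ₂.2.le)
      (hwI η₁ hη₁.1.le hη₁.2.le) (hwI η₂ hη₂.1.le hη₂.2.le)
      (by rw [abs_of_neg (by linarith [hξ₁.2] : ξ₁ - (x+Δ) < 0)]; linarith [hξ₁.1])
      (by rw [abs_of_neg (by linarith [hξ₂.2] : ξ₂ - (x+Δ) < 0)]; linarith [hξ₂.1])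
      (by rw [abs_of_neg (by linarith [hη₁.2] : η₁ - (x+Δ) < 0)]; linarith [hη₁.1])
      (by rw [abs_of_neg (by linarith [hη₂.2] : η₂ - (x+Δ) < 0)]; linarith [hη₂.1])
    rw [he₁', he₂', hf₁', hf₂']
    have heq : sg * (cX1 r (x+Δ) * (Δ * cX1 r ξ₁) + cX r (x+Δ) * (Δ * cX2 r η₁)
        + (cY1 r (x+Δ) * (Δ * cY1 r ξ₂) + cY r (x+Δ) * (Δ * cY2 r η₂)))
        = Δ * (sg * (cX1 r (x+Δ) * cX1 r ξ₁ + cX r (x+Δ) * cX2 r η₁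
          + cY1 r (x+Δ) * cY1 r ξ₂ + cY r (x+Δ) * cY2 r η₂)) := by ring
    rw [heq]
    exact mul_pos hΔpos hΦ
  -- sign of sg·Fs, sg·Gs away from 0
  have hS1F : ∀ a, τlo ≤ a → a ≤ -δ → a + Δ ≤ τhi → sg * Fs r Δ a < 0 := by
    intro a ha h2 hab
    obtain ⟨hFa, -, -⟩ := hFD a ha hab
    have hDa := hmlow a ⟨ha, by linarith⟩
    have h3 : sg * (Fs r Δ a - Δ * cD r a) ≤ 2*B^2*Δ^2 := by
      have h := le_abs_self (sg * (Fs r Δ a - Δ * cD r a))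
      rw [hsgabs] at h
      linarith
    have h4 : sg * Fs r Δ a = sg * (Fs r Δ a - Δ * cD r a) + Δ * (sg * cD r a) := by ring
    have h5 : Δ * (sg * cD r a) ≤ Δ * (-m) := mul_le_mul_of_nonneg_left hDa hΔpos.le
    rw [h4]
    linarith [mul_lt_mul_of_pos_right hΔm' hΔpos, sq_nonneg (B*Δ)]
  have hS1G : ∀ a, τlo ≤ a → a ≤ -δ → a + Δ ≤ τhi → sg * Gs r Δ a < 0 := by
    intro a ha h2 hab
    obtain ⟨-, hGa, -⟩ := hFD a ha hab
    have hDa := hmlow (a+Δ) ⟨by linarith, by linarith⟩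
    have h3 : sg * (Gs r Δ a - Δ * cD r (a+Δ)) ≤ 2*B^2*Δ^2 := by
      have h := le_abs_self (sg * (Gs r Δ a - Δ * cD r (a+Δ)))
      rw [hsgabs] at h
      linarith
    have h4 : sg * Gs r Δ a = sg * (Gs r Δ a - Δ * cD r (a+Δ)) + Δ * (sg * cD r (a+Δ)) := by
      ring
    have h5 : Δ * (sg * cD r (a+Δ)) ≤ Δ * (-m) := mul_le_mul_of_nonneg_left hDa hΔpos.le
    rw [h4]
    linarith [mul_lt_mul_of_pos_right hΔm' hΔpos, sq_nonneg (B*Δ)]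
  have hS2F : ∀ a, δ ≤ a → a + Δ ≤ τhi → 0 < sg * Fs r Δ a := by
    intro a ha hab
    have haτ : τlo ≤ a := by linarith
    obtain ⟨hFa, -, -⟩ := hFD a haτ hab
    have hDa := hmhigh a ⟨by linarith, by linarith⟩
    have h3 : -(2*B^2*Δ^2) ≤ sg * (Fs r Δ a - Δ * cD r a) := by
      have h := neg_abs_le (sg * (Fs r Δ a - Δ * cD r a))
      rw [hsgabs] at h
      linarith
    have h4 : sg * Fs r Δ a = sg * (Fs r Δ a - Δ * cD r a) + Δ * (sg * cD r a) := by ring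
    have h5 : Δ * m ≤ Δ * (sg * cD r a) := mul_le_mul_of_nonneg_left hDa hΔpos.le
    rw [h4]
    linarith [mul_lt_mul_of_pos_right hΔm' hΔpos, sq_nonneg (B*Δ)]
  have hS2G : ∀ a, δ ≤ a → a + Δ ≤ τhi → 0 < sg * Gs r Δ a := by
    intro a ha hab
    have haτ : τlo ≤ a := by linarith
    obtain ⟨-, hGa, -⟩ := hFD a haτ hab
    have hDa := hmhigh (a+Δ) ⟨by linarith, by linarith⟩
    have h3 : -(2*B^2*Δ^2) ≤ sg * (Gs r Δ a - Δ * cD r (a+Δ)) := by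
      have h := neg_abs_le (sg * (Gs r Δ a - Δ * cD r (a+Δ)))
      rw [hsgabs] at h
      linarith
    have h4 : sg * Gs r Δ a = sg * (Gs r Δ a - Δ * cD r (a+Δ)) + Δ * (sg * cD r (a+Δ)) := by
      ring
    have h5 : Δ * m ≤ Δ * (sg * cD r (a+Δ)) := mul_le_mul_of_nonneg_left hDa hΔpos.le
    rw [h4]
    linarith [mul_lt_mul_of_pos_right hΔm' hΔpos, sq_nonneg (B*Δ)]
  -- generic one-crossing principle
  have hGEN : ∀ u : ℝ → ℝ,
      (∀ a, τlo ≤ a → a ≤ -δ → a + Δ ≤ τhi → u a < 0) →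
      (∀ a, δ ≤ a → a + Δ ≤ τhi → 0 < u a) →
      StrictMonoOn u (Icc (-δ) δ) →
      ∀ a a' : ℝ, τlo ≤ a → a ≤ a' → a' + Δ ≤ τhi →
        (u a' < 0 → u a < 0) ∧ (0 < u a → 0 < u a') := by
    intro u hneg hpos hmono a a' ha haa' ha'
    constructor
    · intro hu'
      by_cases h1 : a ≤ -δ
      · exact hneg a ha h1 (by linarith)
      push_neg at h1
      have h2 : a' < δ := by
        by_contra h
        push_neg at h
        linarith [hpos a' h ha']
      rcases eq_or_lt_of_le haa' with h | hlt
      · rw [h]; exact hu'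
      · have := hmono (Set.mem_Icc.mpr ⟨h1.le, by linarith⟩)
          (Set.mem_Icc.mpr ⟨by linarith, h2.le⟩) hlt
        linarith
    · intro hu
      by_cases h1 : δ ≤ a'
      · exact hpos a' h1 ha'
      push_neg at h1
      have h2 : -δ < a := by
        by_contra h
        push_neg at h
        linarith [hneg a ha h (by linarith)]
      rcases eq_or_lt_of_le haa' with h | hlt
      · rw [← h]; exact hu
      · have := hmono (Set.mem_Icc.mpr ⟨h2.le, by linarith⟩)
          (Set.mem_Icc.mpr ⟨by linarith, h1.le⟩) hlt
        linarith
  have hFgen := hGEN (fun a => sg * Fs r Δ a) hS1F hS2F hmonoF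
  have hGgen := hGEN (fun a => sg * Gs r Δ a) hS1G hS2G hmonoG
  constructor
  · -- convexity of the carrying set
    intro a1 a2 a3 h1 h12 h23 h3 hsc1 hsc3
    rw [sideCarries_iff] at hsc1 hsc3 ⊢
    rcases hsgcases with hsg1 | hsg1
    · constructor
      · have hF := (hFgen a2 a3 (by linarith) h23 h3).1
        simp only [hsg1, one_mul] at hF
        exact hF hsc3.1
      · have hG := (hGgen a1 a2 h1 h12 (by linarith)).2
        simp only [hsg1, one_mul] at hG
        exact hG hsc1.2
    · constructor
      · have hF := (hFgen a1 a2 h1 h12 (by linarith)).2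
        simp only [hsg1] at hF
        have h := hF (by linarith [hsc1.1])
        linarith
      · have hG := (hGgen a2 a3 (by linarith) h23 h3).1
        simp only [hsg1] at hG
        have h := hG (by linarith [hsc3.2])
        linarith
  · -- localization
    intro a ha hab hsc
    rw [sideCarries_iff] at hsc
    obtain ⟨hFneg, hGpos⟩ := hsc
    obtain ⟨hFa, -, hdiff⟩ := hFD a ha hab
    -- |Fs| is small
    have hFabs : |Fs r Δ a| ≤ 2*B^2*Δ^2 := by
      rw [abs_of_neg hFneg]
      linarith
    -- |D a| ≤ 4 B² Δ
    have hDa : |cD r a| ≤ 4*B^2*Δ := by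
      have h1 : |Δ * cD r a| ≤ |Δ * cD r a - Fs r Δ a| + |Fs r Δ a| := by
        have := abs_add_le (Δ * cD r a - Fs r Δ a) (Fs r Δ a)
        simp only [sub_add_cancel] at this
        exact this
      have h2 : |Δ * cD r a - Fs r Δ a| = |Fs r Δ a - Δ * cD r a| := abs_sub_comm _ _
      rw [h2] at h1
      have h3 : |Δ * cD r a| = Δ * |cD r a| := by
        rw [abs_mul, abs_of_pos hΔpos]
      rw [h3] at h1
      have h4 : Δ * |cD r a| ≤ 4*B^2*Δ^2 := by linarith
      have h5 : Δ * |cD r a| ≤ Δ * (4*B^2*Δ) := by linarith [h4]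
      exact le_of_mul_le_mul_left h5 hΔpos
    -- a is close to 0
    have hasmall : -(δ/2) < a ∧ a < δ/2 := by
      constructor
      · by_contra h
        push_neg at h
        have := hmlow a ⟨ha, h⟩
        have h6 : |cD r a| = |sg * cD r a| := (hsgabs _).symm
        have h7 : m ≤ |sg * cD r a| := by
          rw [abs_of_neg (by linarith : sg * cD r a < 0)]
          linarith
        rw [← h6] at h7
        linarith [hΔm']
      · by_contra h
        push_neg at h
        have := hmhigh a ⟨by linarith, by linarith⟩
        have h6 : |cD r a| = |sg * cD r a| := (hsgabs _).symm
        have h7 : m ≤ |sg * cD r a| := by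
          rw [abs_of_pos (by linarith : 0 < sg * cD r a)]
          linarith
        rw [← h6] at h7
        linarith [hΔm']
    -- mean value for D between 0 and a
    have hDbelow : P/2 * |a| ≤ |cD r a| := by
      rcases lt_trichotomy a 0 with haneg | hzero | hapos
      · obtain ⟨θ, hθ, heθ⟩ := aux_mvt (cD r) (cD' r) haneg (hdD r hr)
        have heq : cD r a = a * cD' r θ := by
          rw [hD0] at heθ
          have h := heθ
          linarith [h]
        have hθ2 : |θ| ≤ δ2 := by
          rw [abs_le]
          constructor
          · have := hθ.1; have := hasmall.1; linarith
          · have := hθ.2; linarith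
        have hD'θ := hδ2 θ hθ2
        have h8 : P/2 ≤ |cD' r θ| := by
          have h := le_abs_self (sg * cD' r θ)
          rw [hsgabs] at h
          linarith
        rw [heq, abs_mul]
        linarith [mul_le_mul_of_nonneg_left h8 (abs_nonneg a)]
      · rw [hzero, hD0]; simp
      · obtain ⟨θ, hθ, heθ⟩ := aux_mvt (cD r) (cD' r) hapos (hdD r hr)
        have heq : cD r a = a * cD' r θ := by
          rw [hD0] at heθ
          linarith [heθ]
        have hθ2 : |θ| ≤ δ2 := by
          rw [abs_le]
          constructor
          · have := hθ.1; linarith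
          · have := hθ.2; have := hasmall.2; linarith
        have hD'θ := hδ2 θ hθ2
        have h8 : P/2 ≤ |cD' r θ| := by
          have h := le_abs_self (sg * cD' r θ)
          rw [hsgabs] at h
          linarith
        rw [heq, abs_mul]
        linarith [mul_le_mul_of_nonneg_left h8 (abs_nonneg a)]
    -- conclude
    have h9 : P/2 * |a| ≤ 4*B^2*Δ := le_trans hDbelow hDa
    rw [div_mul_eq_mul_div, le_div_iff₀ hPpos]
    linarith [h9]




end AuxNIES


/-- For all sufficiently small mesh size `Δ = (τ̄ − τ̲)/n`, the set of indices
of sides of the approximating polygon carrying an equilibrium point with respect to the origin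
is an interval `[k(Δ), K(Δ)]`; consequently there is no irregular equilibrium sequence, i.e.
no sequence of polygonal equilibria with mesh sizes tending to `0` and indices tending to `∞`. -/
theorem no_irregular_equilibrium_sequences
    (τlo τhi ρ : ℝ) (r : ℝ → ℝ × ℝ)
    (hτlo : τlo < 0) (hτhi : 0 < τhi)
    (hr : ContDiff ℝ 3 r)
    (hρ : 0 < ρ) (hm : r 0 = (0, ρ))
    (hx : ∀ τ ∈ Icc τlo τhi, 0 < (deriv r τ).1)
    (hy : (deriv r 0).2 = 0)
    (huniq : ∀ τ ∈ Icc τlo τhi, IsEquilib r (0, 0) τ → τ = 0)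
    (hκ₁ : 1 + curv r 0 * ρ < 1) (hκ₂ : 1 + curv r 0 * ρ ≠ 0) :
    (∃ Δ₀ > (0 : ℝ), ∀ n : ℕ, 0 < n → (τhi - τlo) / n < Δ₀ →
      ∃ k K : ℕ, ∀ j : ℕ, j + 1 ≤ n →
        (SideCarries (r (τlo + (j : ℝ) * ((τhi - τlo) / n)))
            (r (τlo + ((j : ℝ) + 1) * ((τhi - τlo) / n))) ↔ k ≤ j ∧ j ≤ K)) ∧
    ¬ ∃ (n : ℕ → ℕ) (i : ℕ → ℝ),
        (∀ m, 0 < n m) ∧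
        Tendsto (fun m => (τhi - τlo) / (n m : ℝ)) atTop (nhds 0) ∧
        (∀ m, ∃ j : ℕ, j + 1 ≤ n m ∧
          i m * ((τhi - τlo) / (n m : ℝ)) = τlo + (j : ℝ) * ((τhi - τlo) / (n m : ℝ)) ∧
          SideCarries (r (i m * ((τhi - τlo) / (n m : ℝ))))
            (r ((i m + 1) * ((τhi - τlo) / (n m : ℝ))))) ∧
        Tendsto (fun m => |i m|) atTop atTop := by
  classical
  obtain ⟨Δ0, hΔ0pos, C, hCpos, hkey⟩ :=
    AuxNIES.key r hr τlo τhi ρ hτlo hτhi hρ hm hx hy huniq hκ₂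
  have hspan : (0:ℝ) < τhi - τlo := by linarith
  constructor
  · refine ⟨Δ0, hΔ0pos, ?_⟩
    intro n hn hΔsmall
    have hnR : (0:ℝ) < n := Nat.cast_pos.mpr hn
    have hnne : (n:ℝ) ≠ 0 := ne_of_gt hnR
    have hΔpos : 0 < (τhi - τlo)/(n:ℝ) := div_pos hspan hnR
    obtain ⟨hconv, -⟩ := hkey ((τhi - τlo)/(n:ℝ)) hΔpos hΔsmall.le
    have hnmul : (n:ℝ) * ((τhi - τlo)/(n:ℝ)) = τhi - τlo := by field_simp
    have hgrid : ∀ j : ℕ, j + 1 ≤ n →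
        τlo + (j:ℝ) * ((τhi - τlo)/(n:ℝ)) + (τhi - τlo)/(n:ℝ) ≤ τhi := by
      intro j hj
      have hj' : (j:ℝ) + 1 ≤ (n:ℝ) := by exact_mod_cast hj
      have h2 : ((j:ℝ)+1) * ((τhi - τlo)/(n:ℝ)) ≤ (n:ℝ) * ((τhi - τlo)/(n:ℝ)) :=
        mul_le_mul_of_nonneg_right hj' hΔpos.le
      linarith [h2, hnmul]
    have hτloj : ∀ j : ℕ, τlo ≤ τlo + (j:ℝ) * ((τhi - τlo)/(n:ℝ)) := fun j =>
      le_add_of_nonneg_right (mul_nonneg (Nat.cast_nonneg j) hΔpos.le)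
    have hSCeq : ∀ j : ℕ,
        (SideCarries (r (τlo + (j:ℝ) * ((τhi - τlo)/(n:ℝ))))
          (r (τlo + ((j:ℝ)+1) * ((τhi - τlo)/(n:ℝ)))) ↔
        SideCarries (r (τlo + (j:ℝ) * ((τhi - τlo)/(n:ℝ))))
          (r ((τlo + (j:ℝ) * ((τhi - τlo)/(n:ℝ))) + (τhi - τlo)/(n:ℝ)))) := by
      intro j
      rw [show τlo + ((j:ℝ)+1) * ((τhi - τlo)/(n:ℝ))
        = (τlo + (j:ℝ) * ((τhi - τlo)/(n:ℝ))) + (τhi - τlo)/(n:ℝ) from by ring]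
    set S : Finset ℕ := (Finset.range n).filter
      (fun j => SideCarries (r (τlo + (j:ℝ) * ((τhi - τlo)/(n:ℝ))))
        (r (τlo + ((j:ℝ)+1) * ((τhi - τlo)/(n:ℝ))))) with hSdef
    by_cases hS : S.Nonempty
    · refine ⟨S.min' hS, S.max' hS, ?_⟩
      intro j hj
      constructor
      · intro hsc
        have hjS : j ∈ S := Finset.mem_filter.mpr ⟨Finset.mem_range.mpr (by omega), hsc⟩
        exact ⟨S.min'_le j hjS, S.le_max' j hjS⟩
      · rintro ⟨hkj, hjK⟩
        have hkS := S.min'_mem hS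
        have hKS := S.max'_mem hS
        obtain ⟨hkrange, hksc⟩ := Finset.mem_filter.mp hkS
        obtain ⟨hKrange, hKsc⟩ := Finset.mem_filter.mp hKS
        have hK1 : S.max' hS + 1 ≤ n := by
          have := Finset.mem_range.mp hKrange; omega
        have hksc' := (hSCeq _).mp hksc
        have hKsc' := (hSCeq _).mp hKsc
        apply (hSCeq j).mpr
        have hc1 : (S.min' hS : ℝ) ≤ (j:ℝ) := Nat.cast_le.mpr hkj
        have hc2 : (j:ℝ) ≤ (S.max' hS : ℝ) := Nat.cast_le.mpr hjK
        refine hconv _ _ _ (hτloj (S.min' hS)) ?_ ?_ (hgrid _ hK1) hksc' hKsc'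
        · have := mul_le_mul_of_nonneg_right hc1 hΔpos.le
          linarith
        · have := mul_le_mul_of_nonneg_right hc2 hΔpos.le
          linarith
    · refine ⟨1, 0, ?_⟩
      intro j hj
      constructor
      · intro hsc
        exfalso
        apply hS
        exact ⟨j, Finset.mem_filter.mpr ⟨Finset.mem_range.mpr (by omega), hsc⟩⟩
      · rintro ⟨h1, h0⟩
        omega
  · rintro ⟨n, i, hnpos, hΔ0, hSC, hiT⟩
    have hev1 : ∀ᶠ mm in atTop, (τhi - τlo)/(n mm : ℝ) < Δ0 :=
      hΔ0.eventually (eventually_lt_nhds hΔ0pos)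
    have hev2 : ∀ᶠ mm in atTop, C < |i mm| := hiT.eventually_gt_atTop C
    obtain ⟨mm, h1, h2⟩ := (hev1.and hev2).exists
    obtain ⟨j, hjn, heq, hsc⟩ := hSC mm
    have hnR : (0:ℝ) < (n mm : ℝ) := Nat.cast_pos.mpr (hnpos mm)
    have hΔpos : 0 < (τhi - τlo)/(n mm : ℝ) := div_pos hspan hnR
    obtain ⟨-, hloc⟩ := hkey _ hΔpos h1.le
    have ha1 : τlo ≤ i mm * ((τhi - τlo)/(n mm : ℝ)) := by
      rw [heq]
      exact le_add_of_nonneg_right (mul_nonneg (Nat.cast_nonneg j) hΔpos.le)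
    have ha2 : i mm * ((τhi - τlo)/(n mm : ℝ)) + (τhi - τlo)/(n mm : ℝ) ≤ τhi := by
      rw [heq]
      have hj' : (j:ℝ) + 1 ≤ (n mm : ℝ) := by exact_mod_cast hjn
      have h3 : ((j:ℝ)+1) * ((τhi - τlo)/(n mm : ℝ)) ≤ (n mm:ℝ) * ((τhi - τlo)/(n mm:ℝ)) :=
        mul_le_mul_of_nonneg_right hj' hΔpos.le
      have h4 : (n mm:ℝ) * ((τhi - τlo)/(n mm:ℝ)) = τhi - τlo := by field_simp
      linarith [h3, h4]
    have hsc' : SideCarries (r (i mm * ((τhi - τlo)/(n mm : ℝ))))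
        (r (i mm * ((τhi - τlo)/(n mm : ℝ)) + (τhi - τlo)/(n mm : ℝ))) := by
      rw [show i mm * ((τhi - τlo)/(n mm : ℝ)) + (τhi - τlo)/(n mm : ℝ)
        = (i mm + 1) * ((τhi - τlo)/(n mm : ℝ)) from by ring]
      exact hsc
    have h3 := hloc _ ha1 ha2 hsc'
    have h4 : |i mm * ((τhi - τlo)/(n mm : ℝ))| = |i mm| * ((τhi - τlo)/(n mm : ℝ)) := by
      rw [abs_mul, abs_of_pos hΔpos]
    rw [h4] at h3
    have h5 : |i mm| ≤ C := le_of_mul_le_mul_right h3 hΔpos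
    linarith
end
end

section
/- Let r : [τ̲, τ̄] → ℝ² be a C³ plane curve satisfying the standard setup, with 1 + κρ > 0. For small τ > 0 define u(τ) > 0 implicitly by ⟨r(τ), r(τ+u) − r(τ)⟩ = 0. Then there exists ε > 0 such that u is well defined and continuously differentiable on (0, ε) with u′(τ) > 0 there; that is, u is strictly increasing on (0, ε). -/
open Set Filter MeasureTheory
open scoped ENNReal Topology

noncomputable section

set_option maxHeartbeats 2000000

/-- In the standard setup with `1 + κρ > 0`, the function `u(τ)` defined
implicitly for small `τ > 0` by `⟨r(τ), r(τ+u) − r(τ)⟩ = 0` is well defined and continuously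
differentiable on some interval `(0, ε)` with `u′ > 0` there; in particular it is strictly
increasing on `(0, ε)`. -/
theorem implicit_function_strictly_increasing
    (τlo τhi ρ : ℝ) (r : ℝ → ℝ × ℝ)
    (hτlo : τlo < 0) (hτhi : 0 < τhi)
    (hr : ContDiff ℝ 3 r)
    (hρ : 0 < ρ) (hm : r 0 = (0, ρ))
    (hx : ∀ τ ∈ Icc τlo τhi, 0 < (deriv r τ).1)
    (hy : (deriv r 0).2 = 0)
    (huniq : ∀ τ ∈ Icc τlo τhi, IsEquilib r (0, 0) τ → τ = 0)
    (hκ₁ : 1 + curv r 0 * ρ < 1) (hκ₂ : 0 < 1 + curv r 0 * ρ) :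
    ∃ ε > (0 : ℝ), ∃ u : ℝ → ℝ,
      (∀ τ ∈ Ioo (0 : ℝ) ε, 0 < u τ ∧ dot2 (r τ) (r (τ + u τ) - r τ) = 0) ∧
      ContDiffOn ℝ 1 u (Ioo (0 : ℝ) ε) ∧
      (∀ τ ∈ Ioo (0 : ℝ) ε, 0 < deriv u τ) ∧
      StrictMonoOn u (Ioo (0 : ℝ) ε) := by
  classical
  -- ### smoothness of derivatives
  have hrd : Differentiable ℝ r := hr.differentiable (by norm_num)
  have hr' : ContDiff ℝ 2 (deriv r) := by
    have h3 : (3 : WithTop ℕ∞) = 2 + 1 := by norm_num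
    have hr2 := hr; rw [h3] at hr2
    exact (contDiff_succ_iff_deriv.mp hr2).2.2
  have hq'd : Differentiable ℝ (deriv r) := hr'.differentiable (by norm_num)
  -- ### basic constants
  obtain ⟨a, hadef⟩ : ∃ a : ℝ, a = (deriv r 0).1 := ⟨_, rfl⟩
  obtain ⟨b, hbdef⟩ : ∃ b : ℝ, b = (deriv (deriv r) 0).2 := ⟨_, rfl⟩
  have ha : 0 < a := by rw [hadef]; exact hx 0 ⟨hτlo.le, hτhi.le⟩
  have henorm : enorm2 (deriv r 0) = a := by
    rw [enorm2, dot2, hy, ← hadef, mul_zero, add_zero, Real.sqrt_mul_self ha.le]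
  have hcurv : curv r 0 = b / a ^ 2 := by
    rw [curv, henorm, hy, ← hadef, ← hbdef]
    field_simp
    ring
  have hb : b < 0 := by
    have h1 : curv r 0 * ρ < 0 := by linarith
    rw [hcurv] at h1
    have hk : b / a ^ 2 < 0 := by
      by_contra hcon
      push_neg at hcon
      nlinarith
    have hbe : b = b / a ^ 2 * a ^ 2 := by field_simp
    rw [hbe]
    exact mul_neg_of_neg_of_pos hk (pow_pos ha 2)
  have hA : 0 < a * a + ρ * b := by
    have h2 := hκ₂
    rw [hcurv] at h2
    have he : a * a + ρ * b = a ^ 2 * (1 + b / a ^ 2 * ρ) := by field_simp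
    rw [he]
    exact mul_pos (pow_pos ha 2) h2
  have hB : ρ * b / 2 < 0 := by nlinarith
  -- ### component derivatives
  have hD1 : ∀ t : ℝ, HasDerivAt (fun s => (r s).1) ((deriv r t).1) t := fun t =>
    (ContinuousLinearMap.fst ℝ ℝ ℝ).hasFDerivAt.comp_hasDerivAt t (hrd t).hasDerivAt
  have hD2 : ∀ t : ℝ, HasDerivAt (fun s => (r s).2) ((deriv r t).2) t := fun t =>
    (ContinuousLinearMap.snd ℝ ℝ ℝ).hasFDerivAt.comp_hasDerivAt t (hrd t).hasDerivAt
  have hD1' : ∀ t : ℝ, HasDerivAt (fun s => (deriv r s).1) ((deriv (deriv r) t).1) t := fun t =>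
    (ContinuousLinearMap.fst ℝ ℝ ℝ).hasFDerivAt.comp_hasDerivAt t (hq'd t).hasDerivAt
  have hD2' : ∀ t : ℝ, HasDerivAt (fun s => (deriv r s).2) ((deriv (deriv r) t).2) t := fun t =>
    (ContinuousLinearMap.snd ℝ ℝ ℝ).hasFDerivAt.comp_hasDerivAt t (hq'd t).hasDerivAt
  have hdot : ∀ τ s : ℝ, HasDerivAt (fun s => dot2 (r τ) (r s)) (dot2 (r τ) (deriv r s)) s := by
    intro τ s
    have h := ((hD1 s).const_mul ((r τ).1)).add ((hD2 s).const_mul ((r τ).2))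
    exact h
  -- ### the function φ
  set φ : ℝ × ℝ → ℝ := fun p => dot2 (r p.1) (deriv r p.2) with hφdef
  have hφc : ContDiff ℝ 1 φ := by
    have h1 : ContDiff ℝ 1 fun p : ℝ × ℝ => r p.1 := (hr.of_le (by norm_num)).comp contDiff_fst
    have h2 : ContDiff ℝ 1 fun p : ℝ × ℝ => deriv r p.2 :=
      (hr'.of_le (by norm_num)).comp contDiff_snd
    exact ((contDiff_fst.comp h1).mul (contDiff_fst.comp h2)).add
      ((contDiff_snd.comp h1).mul (contDiff_snd.comp h2))
  have hφd : Differentiable ℝ φ := hφc.differentiable one_ne_zero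
  have hfφcont : Continuous (fderiv ℝ φ) := (contDiff_one_iff_fderiv.mp hφc).2
  -- ### the linear maps M₀, M₁
  set M₀ : (ℝ × ℝ) →L[ℝ] ℝ × ℝ :=
    (ContinuousLinearMap.fst ℝ ℝ ℝ).prod (ContinuousLinearMap.fst ℝ ℝ ℝ) with hM₀
  set M₁ : (ℝ × ℝ) →L[ℝ] ℝ × ℝ :=
    (0 : (ℝ × ℝ) →L[ℝ] ℝ).prod (ContinuousLinearMap.snd ℝ ℝ ℝ) with hM₁
  have hm_apply : ∀ (t : ℝ) (p : ℝ × ℝ), (M₀ + t • M₁) p = (p.1, p.1 + t * p.2) := by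
    intro t p
    simp [hM₀, hM₁, Prod.ext_iff]
  -- ### the function H
  set H : ℝ × ℝ → ℝ := fun p => ∫ t in (0 : ℝ)..1, φ ((M₀ + t • M₁) p) with hHdef
  -- ### key identity
  have hkey : ∀ τ v : ℝ, dot2 (r τ) (r (τ + v) - r τ) = v * H (τ, v) := by
    intro τ v
    have hfc : Continuous fun s => dot2 (r τ) (deriv r s) := by
      have hc := hr'.continuous
      exact (continuous_const.mul hc.fst).add (continuous_const.mul hc.snd)
    have hgderiv : ∀ t ∈ uIcc (0 : ℝ) 1, HasDerivAt (fun t : ℝ => τ + t * v) v t := by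
      intro t _
      simpa using ((hasDerivAt_id t).mul_const v).const_add τ
    have hsub := intervalIntegral.integral_comp_smul_deriv hgderiv continuousOn_const hfc
    simp only [Function.comp, zero_mul, add_zero, one_mul] at hsub
    have hftc := intervalIntegral.integral_eq_sub_of_hasDerivAt
      (f := fun s => dot2 (r τ) (r s)) (f' := fun s => dot2 (r τ) (deriv r s))
      (a := τ) (b := τ + v) (fun s _ => hdot τ s) (hfc.intervalIntegrable _ _)
    have e1 : H (τ, v) = ∫ t in (0 : ℝ)..1, dot2 (r τ) (deriv r (τ + t * v)) := by
      simp only [hHdef]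
      apply intervalIntegral.integral_congr
      intro t _
      show φ ((M₀ + t • M₁) (τ, v)) = dot2 (r τ) (deriv r (τ + t * v))
      rw [hm_apply]
    have e2 : dot2 (r τ) (r (τ + v)) - dot2 (r τ) (r τ) = dot2 (r τ) (r (τ + v) - r τ) := by
      simp [dot2]
      ring
    rw [e1, ← smul_eq_mul, ← intervalIntegral.integral_smul, hsub]
    beta_reduce at hftc
    rw [hftc]
    exact e2.symm
  -- ### derivative of H
  set F' : ℝ × ℝ → ℝ → (ℝ × ℝ) →L[ℝ] ℝ :=
    fun p t => (fderiv ℝ φ ((M₀ + t • M₁) p)).comp (M₀ + t • M₁) with hF'def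
  have hmtc : Continuous fun t : ℝ => M₀ + t • M₁ :=
    continuous_const.add (continuous_id.smul continuous_const)
  have hF'jc : Continuous fun z : (ℝ × ℝ) × ℝ => F' z.1 z.2 := by
    have hpoint : Continuous fun z : (ℝ × ℝ) × ℝ => (M₀ + z.2 • M₁) z.1 := by
      have he : (fun z : (ℝ × ℝ) × ℝ => (M₀ + z.2 • M₁) z.1) =
          fun z => (z.1.1, z.1.1 + z.2 * z.1.2) := funext fun z => hm_apply _ _
      rw [he]; fun_prop
    exact Continuous.clm_comp (hfφcont.comp hpoint) (hmtc.comp continuous_snd)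
  have hHfd : ∀ p : ℝ × ℝ, HasFDerivAt H (∫ t in (0 : ℝ)..1, F' p t) p := by
    intro p
    obtain ⟨C, hC⟩ := ((isCompact_closedBall p 1).prod isCompact_Icc).exists_bound_of_continuousOn
      (f := fun z : (ℝ × ℝ) × ℝ => F' z.1 z.2) hF'jc.continuousOn
    apply intervalIntegral.hasFDerivAt_integral_of_dominated_of_fderiv_le
      (s := Metric.ball p 1) (bound := fun _ => C) (Metric.ball_mem_nhds p one_pos)
    · filter_upwards with x
      exact (hφc.continuous.comp (hmtc.clm_apply continuous_const)).aestronglyMeasurable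
    · exact (hφc.continuous.comp (hmtc.clm_apply continuous_const)).intervalIntegrable _ _
    · exact (hF'jc.comp (Continuous.prodMk_right p)).aestronglyMeasurable
    · filter_upwards with t ht x hx
      rw [Set.uIoc_of_le zero_le_one] at ht
      exact hC (x, t) ⟨Metric.ball_subset_closedBall hx, ⟨ht.1.le, ht.2⟩⟩
    · exact intervalIntegrable_const
    · filter_upwards with t ht x hx
      exact ((hφd ((M₀ + t • M₁) x)).hasFDerivAt).comp x (M₀ + t • M₁).hasFDerivAt
  have hHdiff : Differentiable ℝ H := fun p => (hHfd p).differentiableAt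
  have hHc1 : ContDiff ℝ 1 H := by
    rw [contDiff_one_iff_fderiv]
    refine ⟨hHdiff, ?_⟩
    have he : fderiv ℝ H = fun p => ∫ t in Icc (0 : ℝ) 1, F' p t := by
      funext p
      rw [(hHfd p).fderiv, intervalIntegral.integral_of_le zero_le_one,
        ← MeasureTheory.integral_Icc_eq_integral_Ioc]
    rw [he]
    exact continuous_parametric_integral_of_continuous (μ := volume) (f := F')
      (by exact hF'jc) isCompact_Icc
  -- ### fderiv of φ at the origin
  have h10 : (r 0).1 = 0 := by rw [hm]
  have h20 : (r 0).2 = ρ := by rw [hm]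
  set Lφ : (ℝ × ℝ) →L[ℝ] ℝ := (a * a) • ContinuousLinearMap.fst ℝ ℝ ℝ +
    (ρ * b) • ContinuousLinearMap.snd ℝ ℝ ℝ with hLφ
  have hφfd : HasFDerivAt φ Lφ ((0 : ℝ), (0 : ℝ)) := by
    have hA1 : HasFDerivAt (fun p : ℝ × ℝ => (r p.1).1)
        ((deriv r 0).1 • ContinuousLinearMap.fst ℝ ℝ ℝ) ((0 : ℝ), (0 : ℝ)) :=
      HasDerivAt.comp_hasFDerivAt (h₂ := fun s => (r s).1) ((0:ℝ),(0:ℝ)) (hD1 0) (hasFDerivAt_fst (𝕜 := ℝ) (E := ℝ) (F := ℝ) (p := ((0:ℝ),(0:ℝ))))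
    have hA2 : HasFDerivAt (fun p : ℝ × ℝ => (r p.1).2)
        ((deriv r 0).2 • ContinuousLinearMap.fst ℝ ℝ ℝ) ((0 : ℝ), (0 : ℝ)) :=
      HasDerivAt.comp_hasFDerivAt (h₂ := fun s => (r s).2) ((0:ℝ),(0:ℝ)) (hD2 0) (hasFDerivAt_fst (𝕜 := ℝ) (E := ℝ) (F := ℝ) (p := ((0:ℝ),(0:ℝ))))
    have hB1 : HasFDerivAt (fun p : ℝ × ℝ => (deriv r p.2).1)
        ((deriv (deriv r) 0).1 • ContinuousLinearMap.snd ℝ ℝ ℝ) ((0 : ℝ), (0 : ℝ)) :=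
      HasDerivAt.comp_hasFDerivAt (h₂ := fun s => (deriv r s).1) ((0:ℝ),(0:ℝ)) (hD1' 0) (hasFDerivAt_snd (𝕜 := ℝ) (E := ℝ) (F := ℝ) (p := ((0:ℝ),(0:ℝ))))
    have hB2 : HasFDerivAt (fun p : ℝ × ℝ => (deriv r p.2).2)
        ((deriv (deriv r) 0).2 • ContinuousLinearMap.snd ℝ ℝ ℝ) ((0 : ℝ), (0 : ℝ)) :=
      HasDerivAt.comp_hasFDerivAt (h₂ := fun s => (deriv r s).2) ((0:ℝ),(0:ℝ)) (hD2' 0) (hasFDerivAt_snd (𝕜 := ℝ) (E := ℝ) (F := ℝ) (p := ((0:ℝ),(0:ℝ))))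
    have hsum := (hA1.mul hB1).add (hA2.mul hB2)
    have hfun : φ = fun p : ℝ × ℝ =>
        (r p.1).1 * (deriv r p.2).1 + (r p.1).2 * (deriv r p.2).2 := rfl
    rw [hfun]
    refine hsum.congr_fderiv (Eq.symm ?_)
    apply ContinuousLinearMap.ext
    intro v
    simp [hLφ, h10, h20, hy, ← hadef, ← hbdef, ContinuousLinearMap.smul_apply]
    ring
  have hfφ0 : fderiv ℝ φ ((0 : ℝ), (0 : ℝ)) = Lφ := hφfd.fderiv
  -- ### fderiv of H at the origin
  have h00 : ∀ t : ℝ, (M₀ + t • M₁) ((0 : ℝ), (0 : ℝ)) = ((0 : ℝ), (0 : ℝ)) := by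
    intro t; rw [hm_apply]; simp
  set DH : (ℝ × ℝ) →L[ℝ] ℝ := Lφ.comp M₀ + (2⁻¹ : ℝ) • Lφ.comp M₁ with hDH
  have hDH00 : HasFDerivAt H DH ((0 : ℝ), (0 : ℝ)) := by
    have h := hHfd ((0 : ℝ), (0 : ℝ))
    have he : (∫ t in (0 : ℝ)..1, F' ((0 : ℝ), (0 : ℝ)) t) = DH := by
      have e : ∀ t : ℝ, F' ((0 : ℝ), (0 : ℝ)) t = Lφ.comp M₀ + t • Lφ.comp M₁ := by
        intro t
        simp only [hF'def]
        rw [h00 t, hfφ0, ContinuousLinearMap.comp_add, ContinuousLinearMap.comp_smul]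
      rw [intervalIntegral.integral_congr (g := fun t : ℝ => Lφ.comp M₀ + t • Lφ.comp M₁)
        (fun t _ => e t)]
      rw [intervalIntegral.integral_add (f := fun _ : ℝ => Lφ.comp M₀)
        (g := fun t : ℝ => t • Lφ.comp M₁) intervalIntegrable_const
        (Continuous.intervalIntegrable (by fun_prop) _ _),
        intervalIntegral.integral_const, intervalIntegral.integral_smul_const, integral_id,
        hDH]
      rw [show ((1:ℝ)^2 - 0^2)/2 = (2⁻¹:ℝ) by norm_num, show ((1:ℝ) - 0) = 1 by norm_num,
        one_smul]
    rw [← he]; exact h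
  have hDHapp : ∀ v : ℝ × ℝ, DH v = (a * a + ρ * b) * v.1 + ρ * b / 2 * v.2 := by
    intro v
    simp [hDH, hLφ, hM₀, hM₁]
    ring
  -- ### the local diffeomorphism Φ
  set Φ : ℝ × ℝ → ℝ × ℝ := fun p => (p.1, H p) with hΦdef
  have hΦc : ContDiff ℝ 1 Φ := contDiff_fst.prodMk hHc1
  set eLin : (ℝ × ℝ) ≃ₗ[ℝ] ℝ × ℝ :=
    { toFun := fun v => (v.1, (a * a + ρ * b) * v.1 + ρ * b / 2 * v.2)
      map_add' := by
        intro v w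
        simp only [Prod.fst_add, Prod.snd_add, Prod.mk_add_mk, Prod.mk.injEq]
        exact ⟨trivial, by ring⟩
      map_smul' := by
        intro c v
        simp only [Prod.smul_fst, Prod.smul_snd, Prod.smul_mk, smul_eq_mul,
          RingHom.id_apply, Prod.mk.injEq]
        exact ⟨trivial, by ring⟩
      invFun := fun w => (w.1, (w.2 - (a * a + ρ * b) * w.1) / (ρ * b / 2))
      left_inv := by
        intro v
        have hne : ρ * b / 2 ≠ 0 := ne_of_lt hB
        dsimp only
        rw [Prod.ext_iff]
        refine ⟨rfl, ?_⟩
        rw [show (a * a + ρ * b) * v.1 + ρ * b / 2 * v.2 - (a * a + ρ * b) * v.1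
            = ρ * b / 2 * v.2 by ring]
        exact mul_div_cancel_left₀ _ hne
      right_inv := by
        intro w
        have hne : ρ * b / 2 ≠ 0 := ne_of_lt hB
        dsimp only
        rw [Prod.ext_iff]
        refine ⟨rfl, ?_⟩
        rw [mul_div_cancel₀ _ hne]
        ring } with heLin
  set eL : (ℝ × ℝ) ≃L[ℝ] ℝ × ℝ := eLin.toContinuousLinearEquiv with heL
  have heLapp : ∀ v : ℝ × ℝ,
      (eL : (ℝ × ℝ) →L[ℝ] ℝ × ℝ) v = (v.1, (a * a + ρ * b) * v.1 + ρ * b / 2 * v.2) := by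
    intro v
    rfl
  have hΦfd : HasFDerivAt Φ ((eL : (ℝ × ℝ) →L[ℝ] ℝ × ℝ)) ((0 : ℝ), (0 : ℝ)) := by
    have h := HasFDerivAt.prodMk (hasFDerivAt_fst (𝕜 := ℝ) (E := ℝ) (F := ℝ) (p := ((0:ℝ),(0:ℝ)))) hDH00
    refine h.congr_fderiv (Eq.symm ?_)
    apply ContinuousLinearMap.ext
    intro v
    rw [heLapp]
    have hpr : ((ContinuousLinearMap.fst ℝ ℝ ℝ).prod DH) v = (v.1, DH v) := rfl
    rw [hpr, hDHapp]
  have hΦs : HasStrictFDerivAt Φ ((eL : (ℝ × ℝ) →L[ℝ] ℝ × ℝ)) ((0 : ℝ), (0 : ℝ)) :=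
    hΦc.contDiffAt.hasStrictFDerivAt' hΦfd one_ne_zero
  have hH00 : H ((0 : ℝ), (0 : ℝ)) = 0 := by
    have he : ∀ t : ℝ, φ ((M₀ + t • M₁) ((0 : ℝ), (0 : ℝ))) = 0 := by
      intro t
      rw [h00 t]
      show dot2 (r 0) (deriv r 0) = 0
      rw [dot2, h10, h20, hy]
      ring
    simp only [hHdef]
    rw [intervalIntegral.integral_congr (g := fun _ : ℝ => (0 : ℝ)) (fun t _ => he t)]
    simp
  have hΦ00 : Φ ((0 : ℝ), (0 : ℝ)) = ((0 : ℝ), (0 : ℝ)) := by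
    simp only [hΦdef, hH00]
  -- ### the local inverse
  set inv : ℝ × ℝ → ℝ × ℝ := HasStrictFDerivAt.localInverse Φ eL ((0 : ℝ), (0 : ℝ)) hΦs
    with hinvdef
  have hinv00 : inv ((0 : ℝ), (0 : ℝ)) = ((0 : ℝ), (0 : ℝ)) := by
    have h := hΦs.localInverse_apply_image
    rwa [hΦ00] at h
  have hinvcd : ContDiffAt ℝ 1 inv ((0 : ℝ), (0 : ℝ)) := by
    have h := ContDiffAt.to_localInverse (f' := eL) hΦc.contDiffAt hΦfd one_ne_zero
    rw [hΦ00] at h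
    exact h
  have hrinv : ∀ᶠ q in 𝓝 ((0 : ℝ), (0 : ℝ)), Φ (inv q) = q := by
    have h := hΦs.eventually_right_inverse
    rwa [hΦ00] at h
  -- ### the implicit function u
  set u : ℝ → ℝ := fun τ => (inv (τ, 0)).2 with hudef
  have hueq0 : u 0 = 0 := by
    show (inv ((0 : ℝ), (0 : ℝ))).2 = 0
    rw [hinv00]
  have htend : Filter.Tendsto (fun τ : ℝ => ((τ : ℝ), (0 : ℝ))) (𝓝 0)
      (𝓝 ((0 : ℝ), (0 : ℝ))) := by
    have hc : Continuous fun τ : ℝ => ((τ : ℝ), (0 : ℝ)) := by fun_prop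
    simpa using hc.tendsto 0
  have heq : ∀ᶠ τ in 𝓝 (0 : ℝ), H (τ, u τ) = 0 := by
    filter_upwards [htend.eventually hrinv] with τ hτ
    have h1 : (inv (τ, 0)).1 = τ := congrArg Prod.fst hτ
    have h2 : H (inv (τ, 0)) = 0 := congrArg Prod.snd hτ
    have h3 : inv (τ, 0) = (τ, u τ) := Prod.ext h1 rfl
    rwa [h3] at h2
  have hucd : ContDiffAt ℝ 1 u 0 := by
    have h1 : ContDiffAt ℝ 1 (fun τ : ℝ => ((τ : ℝ), (0 : ℝ))) 0 :=
      (contDiff_id.prodMk contDiff_const).contDiffAt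
    have hcomp : ContDiffAt ℝ 1 (fun τ : ℝ => inv (τ, 0)) 0 :=
      ContDiffAt.comp 0 hinvcd h1
    exact ContDiffAt.comp 0 contDiffAt_snd hcomp
  have hud : DifferentiableAt ℝ u 0 := hucd.differentiableAt one_ne_zero
  -- ### computing deriv u 0
  have hγ : HasDerivAt (fun τ : ℝ => ((τ : ℝ), u τ)) ((1 : ℝ), deriv u 0) 0 :=
    HasDerivAt.prodMk (hasDerivAt_id (0:ℝ)) hud.hasDerivAt
  have hHcomp : HasDerivAt (H ∘ (fun τ : ℝ => ((τ : ℝ), u τ))) (DH ((1 : ℝ), deriv u 0)) 0 :=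
    HasFDerivAt.comp_hasDerivAt_of_eq (hl := hDH00) (hf := hγ) (hy := by rw [hueq0])
  have hEq0 : DH ((1 : ℝ), deriv u 0) = 0 := by
    have hzero : (fun τ : ℝ => H (τ, u τ)) =ᶠ[𝓝 (0 : ℝ)] fun _ => (0 : ℝ) := heq
    have h := hHcomp.congr_of_eventuallyEq hzero.symm
    have h2 := h.deriv
    rw [deriv_const] at h2
    exact h2.symm
  have hderivu : 0 < deriv u 0 := by
    rw [hDHapp] at hEq0
    simp only at hEq0
    nlinarith
  -- ### eventual properties
  obtain ⟨s, hsmem, hscd⟩ := hucd.contDiffOn le_rfl (by simp)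
  obtain ⟨t0, ht0sub, ht0open, ht0mem⟩ := mem_nhds_iff.mp hsmem
  have hderivcont : ContinuousOn (deriv u) t0 :=
    (hscd.mono ht0sub).continuousOn_deriv_of_isOpen ht0open le_rfl
  have hcderiv0 : ContinuousAt (deriv u) 0 :=
    hderivcont.continuousAt (ht0open.mem_nhds ht0mem)
  have hposev : ∀ᶠ τ in 𝓝 (0 : ℝ), 0 < deriv u τ :=
    hcderiv0.preimage_mem_nhds (Ioi_mem_nhds hderivu)
  have hcdev : ∀ᶠ τ in 𝓝 (0 : ℝ), ContDiffAt ℝ 1 u τ := hucd.eventually (by simp)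
  have hall : ∀ᶠ τ in 𝓝 (0 : ℝ),
      (H (τ, u τ) = 0 ∧ 0 < deriv u τ) ∧ ContDiffAt ℝ 1 u τ := (heq.and hposev).and hcdev
  rw [Metric.eventually_nhds_iff] at hall
  obtain ⟨δ, hδ, hball⟩ := hall
  have hsmall : ∀ τ ∈ Icc (0 : ℝ) (δ / 2),
      (H (τ, u τ) = 0 ∧ 0 < deriv u τ) ∧ ContDiffAt ℝ 1 u τ := by
    intro τ hτ
    apply hball
    rw [Real.dist_eq, sub_zero, abs_of_nonneg hτ.1]
    linarith [hτ.2]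
  have hmono : StrictMonoOn u (Icc 0 (δ / 2)) := by
    apply strictMonoOn_of_deriv_pos (convex_Icc _ _)
    · intro τ hτ
      exact ((hsmall τ hτ).2.continuousAt).continuousWithinAt
    · intro τ hτ
      rw [interior_Icc] at hτ
      exact (hsmall τ (Ioo_subset_Icc_self hτ)).1.2
  refine ⟨δ / 2, by positivity, u, ?_, ?_, ?_, ?_⟩
  · intro τ hτ
    constructor
    · have h := hmono (Set.left_mem_Icc.mpr (by linarith [hτ.2, hτ.1])) (Ioo_subset_Icc_self hτ)
        hτ.1
      rwa [hueq0] at h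
    · rw [hkey τ (u τ), (hsmall τ (Ioo_subset_Icc_self hτ)).1.1, mul_zero]
  · intro τ hτ
    exact ((hsmall τ (Ioo_subset_Icc_self hτ)).2).contDiffWithinAt
  · intro τ hτ
    exact (hsmall τ (Ioo_subset_Icc_self hτ)).1.2
  · exact hmono.mono Ioo_subset_Icc_self
end
end

section
/- Let f : [0,a] × [0,b] → ℝ be a C³ function with the grid setup. If p ∈ int D is not a stationary point of f (i.e. grad f(p) ≠ 0), then p has a neighborhood U ⊆ D such that for every n ≥ 1, if a grid vertex p_{i,j} of F_n and all four of its neighbors are contained in U, then p_{i,j} is not a stationary grid vertex. -/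
open Set Filter
open scoped Topology

noncomputable section

/-- The grid vertex `p_{i,j} = (ia/n, jb/n)` of the `n × n` partition of `[0,a] × [0,b]`. -/
def gridPt (a b : ℝ) (n i j : ℕ) : ℝ × ℝ := ((i : ℝ) * a / n, (j : ℝ) * b / n)

/-- Partial derivative with respect to the first variable. -/
def pdx (f : ℝ × ℝ → ℝ) (p : ℝ × ℝ) : ℝ := deriv (fun x => f (x, p.2)) p.1

/-- Partial derivative with respect to the second variable. -/
def pdy (f : ℝ × ℝ → ℝ) (p : ℝ × ℝ) : ℝ := deriv (fun y => f (p.1, y)) p.2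

/-- The determinant of the Hessian of `f` at `p`. -/
def hessDet (f : ℝ × ℝ → ℝ) (p : ℝ × ℝ) : ℝ :=
  pdx (pdx f) p * pdy (pdy f) p - pdx (pdy f) p * pdy (pdx f) p

/-- `p` is a stationary point of `f` (vanishing gradient). -/
def IsStationaryPt (f : ℝ × ℝ → ℝ) (p : ℝ × ℝ) : Prop := fderiv ℝ f p = 0

/-- The grid vertex `p_{i,j}` (with `1 ≤ i, j ≤ n − 1`) is a stationary grid vertex: for each
opposite pair of its neighbours, its `f`-value is `≥` both or `≤` both of their `f`-values. -/
def StationaryGridVertex (f : ℝ × ℝ → ℝ) (a b : ℝ) (n i j : ℕ) : Prop :=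
  (max (f (gridPt a b n (i - 1) j)) (f (gridPt a b n (i + 1) j)) ≤ f (gridPt a b n i j) ∨
    f (gridPt a b n i j) ≤ min (f (gridPt a b n (i - 1) j)) (f (gridPt a b n (i + 1) j))) ∧
  (max (f (gridPt a b n i (j - 1))) (f (gridPt a b n i (j + 1))) ≤ f (gridPt a b n i j) ∨
    f (gridPt a b n i j) ≤ min (f (gridPt a b n i (j - 1))) (f (gridPt a b n i (j + 1))))

/-- The grid vertex `p_{i,j}` is minimal within its grid circle of radius `r`. -/
def MinimalInCircle (f : ℝ × ℝ → ℝ) (a b : ℝ) (n i j r : ℕ) : Prop :=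
  ∀ l m : ℕ, l ≤ n → m ≤ n →
    max ((i : ℤ) - l).natAbs ((j : ℤ) - m).natAbs ≤ r →
    f (gridPt a b n i j) ≤ f (gridPt a b n l m)

/-- The grid vertex `p_{i,j}` is maximal within its grid circle of radius `r`. -/
def MaximalInCircle (f : ℝ × ℝ → ℝ) (a b : ℝ) (n i j r : ℕ) : Prop :=
  ∀ l m : ℕ, l ≤ n → m ≤ n →
    max ((i : ℤ) - l).natAbs ((j : ℤ) - m).natAbs ≤ r →
    f (gridPt a b n l m) ≤ f (gridPt a b n i j)


lemma key_mono (f : ℝ × ℝ → ℝ) (hdiff : Differentiable ℝ f)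
    (v : ℝ × ℝ) (U : Set (ℝ × ℝ)) (hUo : IsOpen U) (hUc : Convex ℝ U)
    (hpos : ∀ q ∈ U, 0 < fderiv ℝ f q v)
    (q : ℝ × ℝ) (hq : q ∈ U) (t : ℝ) (ht : 0 < t) (hqt : q + t • v ∈ U) :
    f q < f (q + t • v) := by
  set s : Set ℝ := {u : ℝ | q + u • v ∈ U} with hs
  have hso : IsOpen s := hUo.preimage (by continuity)
  have hsc : Convex ℝ s := by
    intro t1 h1 t2 h2 α β hα hβ hαβ
    have hβ' : β = 1 - α := by linarith
    subst hβ'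
    have : q + (α • t1 + (1 - α) • t2) • v = α • (q + t1 • v) + (1 - α) • (q + t2 • v) := by
      simp only [smul_eq_mul]; module
    show q + _ • v ∈ U
    rw [this]
    exact hUc h1 h2 hα hβ hαβ
  have hd : ∀ u : ℝ, HasDerivAt (fun u : ℝ => f (q + u • v)) (fderiv ℝ f (q + u • v) v) u := by
    intro u
    have h2 : HasDerivAt (fun u : ℝ => q + u • v) v u := by
      simpa using ((hasDerivAt_id u).smul_const v).const_add q
    exact (hdiff (q + u • v)).hasFDerivAt.comp_hasDerivAt u h2
  have hmono : StrictMonoOn (fun u : ℝ => f (q + u • v)) s :=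
    strictMonoOn_of_deriv_pos hsc
      (fun u _ => ((hd u).continuousAt).continuousWithinAt)
      (fun u hu => by
        rw [(hd u).deriv]
        exact hpos _ (by rwa [hso.interior_eq] at hu))
  have h0 : (0 : ℝ) ∈ s := by simpa [hs] using hq
  have := hmono h0 hqt ht
  simpa using this

lemma aux_nbhd (a b : ℝ) (f : ℝ × ℝ → ℝ) (hf : ContDiff ℝ 3 f) (v p : ℝ × ℝ)
    (hp : p ∈ interior (Icc (0 : ℝ) a ×ˢ Icc (0 : ℝ) b))
    (hg : fderiv ℝ f p v ≠ 0) :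
    ∃ U : Set (ℝ × ℝ), U ∈ nhds p ∧ U ⊆ Icc (0 : ℝ) a ×ˢ Icc (0 : ℝ) b ∧
      ∀ q ∈ U, ∀ t : ℝ, 0 < t → q - t • v ∈ U → q + t • v ∈ U →
        (f (q - t • v) < f q ∧ f q < f (q + t • v)) ∨
        (f (q + t • v) < f q ∧ f q < f (q - t • v)) := by
  have hdiff : Differentiable ℝ f := hf.differentiable (by norm_num)
  have hcont : Continuous fun q => fderiv ℝ f q v :=
    (hf.continuous_fderiv (by norm_num)).clm_apply continuous_const
  have hsub : ∀ q : ℝ × ℝ, ∀ t : ℝ, q = (q - t • v) + t • v := by intro q t; abel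
  rcases lt_or_gt_of_ne hg with hneg | hpos
  · -- negative case : use -f
    set S : Set (ℝ × ℝ) := {q | fderiv ℝ f q v < 0} with hS
    have hSo : IsOpen S := isOpen_lt hcont continuous_const
    obtain ⟨ε, hε, hball⟩ := Metric.isOpen_iff.mp (isOpen_interior.inter hSo) p ⟨hp, hneg⟩
    refine ⟨Metric.ball p ε, Metric.ball_mem_nhds p hε,
      fun q hq => interior_subset (hball hq).1, ?_⟩
    intro q hq t ht hqm hqp
    have hpos' : ∀ q ∈ Metric.ball p ε, 0 < fderiv ℝ (fun x => -f x) q v := by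
      intro q hq
      rw [fderiv_fun_neg, ContinuousLinearMap.neg_apply]
      have := (hball hq).2
      simpa [hS] using this
    have h1 : (fun x => -f x) q < (fun x => -f x) (q + t • v) :=
      key_mono _ hdiff.neg v _ Metric.isOpen_ball (convex_ball p ε) hpos' q hq t ht hqp
    have h2 : (fun x => -f x) (q - t • v) < (fun x => -f x) q := by
      have := key_mono _ hdiff.neg v _ Metric.isOpen_ball (convex_ball p ε) hpos'
        (q - t • v) hqm t ht (by rw [← hsub q t]; exact hq)
      rwa [← hsub q t] at this
    right
    constructor <;> simp only at h1 h2 <;> linarith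
  · set S : Set (ℝ × ℝ) := {q | 0 < fderiv ℝ f q v} with hS
    have hSo : IsOpen S := isOpen_lt continuous_const hcont
    obtain ⟨ε, hε, hball⟩ := Metric.isOpen_iff.mp (isOpen_interior.inter hSo) p ⟨hp, hpos⟩
    refine ⟨Metric.ball p ε, Metric.ball_mem_nhds p hε,
      fun q hq => interior_subset (hball hq).1, ?_⟩
    intro q hq t ht hqm hqp
    have hpos' : ∀ q ∈ Metric.ball p ε, 0 < fderiv ℝ f q v := fun q hq => (hball hq).2
    have h1 : f q < f (q + t • v) :=
      key_mono _ hdiff v _ Metric.isOpen_ball (convex_ball p ε) hpos' q hq t ht hqp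
    have h2 : f (q - t • v) < f q := by
      have := key_mono _ hdiff v _ Metric.isOpen_ball (convex_ball p ε) hpos'
        (q - t • v) hqm t ht (by rw [← hsub q t]; exact hq)
      rwa [← hsub q t] at this
    exact Or.inl ⟨h2, h1⟩

lemma grid_x_sub (a b : ℝ) (n i j : ℕ) (hi : 1 ≤ i) :
    gridPt a b n (i - 1) j = gridPt a b n i j - (a / n) • ((1:ℝ), (0:ℝ)) := by
  simp only [gridPt, Prod.smul_mk, smul_eq_mul, Prod.mk_sub_mk, Nat.cast_sub hi, Nat.cast_one,
    Prod.mk.injEq]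
  constructor <;> ring

lemma grid_x_add (a b : ℝ) (n i j : ℕ) :
    gridPt a b n (i + 1) j = gridPt a b n i j + (a / n) • ((1:ℝ), (0:ℝ)) := by
  simp only [gridPt, Prod.smul_mk, smul_eq_mul, Prod.mk_add_mk, Nat.cast_add, Nat.cast_one,
    Prod.mk.injEq]
  constructor <;> ring

lemma grid_y_sub (a b : ℝ) (n i j : ℕ) (hj : 1 ≤ j) :
    gridPt a b n i (j - 1) = gridPt a b n i j - (b / n) • ((0:ℝ), (1:ℝ)) := by
  simp only [gridPt, Prod.smul_mk, smul_eq_mul, Prod.mk_sub_mk, Nat.cast_sub hj, Nat.cast_one,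
    Prod.mk.injEq]
  constructor <;> ring

lemma grid_y_add (a b : ℝ) (n i j : ℕ) :
    gridPt a b n i (j + 1) = gridPt a b n i j + (b / n) • ((0:ℝ), (1:ℝ)) := by
  simp only [gridPt, Prod.smul_mk, smul_eq_mul, Prod.mk_add_mk, Nat.cast_add, Nat.cast_one,
    Prod.mk.injEq]
  constructor <;> ring

/-- If `p ∈ int D` is not a stationary point of `f`, then `p` has a
neighbourhood `U ⊆ D` such that for every `n ≥ 1`, any grid vertex all of whose neighbours lie
in `U` together with the vertex itself is not a stationary grid vertex. -/
theorem no_stationary_grid_vertex_near_regular_point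
    (a b : ℝ) (ha : 0 < a) (hb : 0 < b) (f : ℝ × ℝ → ℝ)
    (hf : ContDiff ℝ 3 f)
    (hfin : {p ∈ Icc (0 : ℝ) a ×ˢ Icc (0 : ℝ) b | IsStationaryPt f p}.Finite)
    (hinterior : {p ∈ Icc (0 : ℝ) a ×ˢ Icc (0 : ℝ) b | IsStationaryPt f p} ⊆
      interior (Icc (0 : ℝ) a ×ˢ Icc (0 : ℝ) b))
    (hhess : ∀ p ∈ Icc (0 : ℝ) a ×ˢ Icc (0 : ℝ) b, IsStationaryPt f p → hessDet f p ≠ 0)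
    (hnondeg : ∀ n i j l m : ℕ, 0 < n → i ≤ n → j ≤ n → l ≤ n → m ≤ n →
      (i, j) ≠ (l, m) → f (gridPt a b n i j) ≠ f (gridPt a b n l m))
    (p : ℝ × ℝ) (hp : p ∈ interior (Icc (0 : ℝ) a ×ˢ Icc (0 : ℝ) b))
    (hreg : ¬ IsStationaryPt f p) :
    ∃ U : Set (ℝ × ℝ), U ∈ nhds p ∧ U ⊆ Icc (0 : ℝ) a ×ˢ Icc (0 : ℝ) b ∧
      ∀ n : ℕ, 0 < n → ∀ i j : ℕ, 1 ≤ i → i + 1 ≤ n → 1 ≤ j → j + 1 ≤ n →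
        gridPt a b n i j ∈ U →
        gridPt a b n (i - 1) j ∈ U → gridPt a b n (i + 1) j ∈ U →
        gridPt a b n i (j - 1) ∈ U → gridPt a b n i (j + 1) ∈ U →
        ¬ StationaryGridVertex f a b n i j := by
  have hbasis : fderiv ℝ f p ((1:ℝ), (0:ℝ)) ≠ 0 ∨ fderiv ℝ f p ((0:ℝ), (1:ℝ)) ≠ 0 := by
    by_contra h
    push_neg at h
    apply hreg
    unfold IsStationaryPt
    apply ContinuousLinearMap.ext
    intro v
    have hv : v = v.1 • ((1:ℝ), (0:ℝ)) + v.2 • ((0:ℝ), (1:ℝ)) := by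
      ext <;> simp
    rw [hv, map_add, map_smul, map_smul, h.1, h.2]
    simp
  rcases hbasis with hx | hy
  · obtain ⟨U, hU1, hU2, hU3⟩ := aux_nbhd a b f hf ((1:ℝ), (0:ℝ)) p hp hx
    refine ⟨U, hU1, hU2, ?_⟩
    intro n hn i j hi hin hj hjn hq hqm hqp _ _ hSGV
    have ht : 0 < a / n := div_pos ha (by exact_mod_cast hn)
    have e1 := grid_x_sub a b n i j hi
    have e2 := grid_x_add a b n i j
    have hbetween := hU3 _ hq (a / n) ht (e1 ▸ hqm) (e2 ▸ hqp)
    rw [← e1, ← e2] at hbetween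
    rcases hSGV.1 with h | h <;> rcases hbetween with ⟨h1, h2⟩ | ⟨h1, h2⟩ <;>
      simp only [max_le_iff, le_min_iff] at h <;> linarith [h.1, h.2]
  · obtain ⟨U, hU1, hU2, hU3⟩ := aux_nbhd a b f hf ((0:ℝ), (1:ℝ)) p hp hy
    refine ⟨U, hU1, hU2, ?_⟩
    intro n hn i j hi hin hj hjn hq _ _ hqm hqp hSGV
    have ht : 0 < b / n := div_pos hb (by exact_mod_cast hn)
    have e1 := grid_y_sub a b n i j hj
    have e2 := grid_y_add a b n i j
    have hbetween := hU3 _ hq (b / n) ht (e1 ▸ hqm) (e2 ▸ hqp)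
    rw [← e1, ← e2] at hbetween
    rcases hSGV.2 with h | h <;> rcases hbetween with ⟨h1, h2⟩ | ⟨h1, h2⟩ <;>
      simp only [max_le_iff, le_min_iff] at h <;> linarith [h.1, h.2]
end
end

section
/- Let f : [0,a] × [0,b] → ℝ be a C³ function with the grid setup. If p ∈ int D is a local minimum of f, then p has a neighborhood U and there is a sufficiently large radius r such that for every sufficiently large n there is exactly one grid vertex p_{i,j} of F_n contained in U whose f-value is minimal within its grid circle C_r(p_{i,j}). -/
open Set Filter
open scoped Topology

noncomputable section

lemma pdx_eq (f : ℝ × ℝ → ℝ) (q : ℝ × ℝ) (hd : DifferentiableAt ℝ f q) :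
    pdx f q = fderiv ℝ f q (1, 0) := by
  have h2 : HasDerivAt (fun x : ℝ => (x, q.2)) ((1:ℝ), (0:ℝ)) q.1 :=
    (hasDerivAt_id q.1).prodMk (hasDerivAt_const q.1 q.2)
  have h1 : HasFDerivAt f (fderiv ℝ f q) (q.1, q.2) := by
    simpa using hd.hasFDerivAt
  exact (h1.comp_hasDerivAt q.1 h2).deriv

lemma pdy_eq (f : ℝ × ℝ → ℝ) (q : ℝ × ℝ) (hd : DifferentiableAt ℝ f q) :
    pdy f q = fderiv ℝ f q (0, 1) := by
  have h2 : HasDerivAt (fun y : ℝ => (q.1, y)) ((0:ℝ), (1:ℝ)) q.2 :=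
    (hasDerivAt_const q.2 q.1).prodMk (hasDerivAt_id q.2)
  have h1 : HasFDerivAt f (fderiv ℝ f q) (q.1, q.2) := by
    simpa using hd.hasFDerivAt
  exact (h1.comp_hasDerivAt q.2 h2).deriv

lemma fderiv_apply_eq (f : ℝ × ℝ → ℝ) (hf : ContDiff ℝ 3 f) (v : ℝ × ℝ) (q : ℝ × ℝ) :
    fderiv ℝ (fun z => fderiv ℝ f z v) q = (fderiv ℝ (fderiv ℝ f) q).flip v := by
  have hg : ContDiff ℝ 2 (fderiv ℝ f) := hf.fderiv_right (by norm_num)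
  have hgH : HasFDerivAt (fderiv ℝ f) (fderiv ℝ (fderiv ℝ f) q) q :=
    (hg.differentiable (by norm_num) q).hasFDerivAt
  have h2 : (fun z => fderiv ℝ f z v) = (⇑(ContinuousLinearMap.apply ℝ ℝ v) ∘ fderiv ℝ f) := rfl
  rw [h2, ((ContinuousLinearMap.apply ℝ ℝ v).hasFDerivAt.comp q hgH).fderiv]
  exact ContinuousLinearMap.ext fun u => rfl

lemma hessDet_eq (f : ℝ × ℝ → ℝ) (hf : ContDiff ℝ 3 f) (p : ℝ × ℝ) :
    hessDet f p =
      fderiv ℝ (fderiv ℝ f) p (1,0) (1,0) * fderiv ℝ (fderiv ℝ f) p (0,1) (0,1)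
      - fderiv ℝ (fderiv ℝ f) p (1,0) (0,1) * fderiv ℝ (fderiv ℝ f) p (0,1) (1,0) := by
  have hd : Differentiable ℝ f := hf.differentiable (by norm_num)
  have hg : ContDiff ℝ 2 (fderiv ℝ f) := hf.fderiv_right (by norm_num)
  have hgd : Differentiable ℝ (fderiv ℝ f) := hg.differentiable (by norm_num)
  have hx : pdx f = fun q => fderiv ℝ f q (1,0) := funext fun q => pdx_eq f q (hd q)
  have hy : pdy f = fun q => fderiv ℝ f q (0,1) := funext fun q => pdy_eq f q (hd q)
  have hdapp : ∀ v : ℝ × ℝ, DifferentiableAt ℝ (fun z => fderiv ℝ f z v) p := by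
    intro v
    exact (ContinuousLinearMap.apply ℝ ℝ v).differentiable.comp hgd |>.differentiableAt
  unfold hessDet
  rw [hx, hy, pdx_eq _ _ (hdapp _), pdx_eq _ _ (hdapp _), pdy_eq _ _ (hdapp _),
    pdy_eq _ _ (hdapp _), fderiv_apply_eq f hf, fderiv_apply_eq f hf]
  rfl

lemma opnorm_le_abs (L : ℝ × ℝ →L[ℝ] ℝ) : ‖L‖ ≤ |L (1,0)| + |L (0,1)| := by
  refine ContinuousLinearMap.opNorm_le_bound _ (by positivity) fun u => ?_
  have e : L u = u.1 * L (1,0) + u.2 * L (0,1) := by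
    have hu : u = u.1 • ((1:ℝ),(0:ℝ)) + u.2 • ((0:ℝ),(1:ℝ)) := by ext <;> simp
    conv_lhs => rw [hu]
    rw [map_add, map_smul, map_smul]
    simp [smul_eq_mul]
  rw [e, Real.norm_eq_abs]
  have h1 : |u.1| ≤ ‖u‖ := by rw [← Real.norm_eq_abs]; exact norm_fst_le u
  have h2 : |u.2| ≤ ‖u‖ := by rw [← Real.norm_eq_abs]; exact norm_snd_le u
  calc |u.1 * L (1,0) + u.2 * L (0,1)| ≤ |u.1 * L (1,0)| + |u.2 * L (0,1)| := abs_add_le _ _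
    _ = |u.1| * |L (1,0)| + |u.2| * |L (0,1)| := by rw [abs_mul, abs_mul]
    _ ≤ ‖u‖ * |L (1,0)| + ‖u‖ * |L (0,1)| := by
        nlinarith [abs_nonneg (L (1,0)), abs_nonneg (L (0,1))]
    _ = (|L (1,0)| + |L (0,1)|) * ‖u‖ := by ring

lemma exists_antilip (H : ℝ × ℝ →L[ℝ] (ℝ × ℝ →L[ℝ] ℝ))
    (hdet : H (1,0) (1,0) * H (0,1) (0,1) - H (1,0) (0,1) * H (0,1) (1,0) ≠ 0) :
    ∃ c > 0, ∀ u : ℝ × ℝ, c * ‖u‖ ≤ ‖H u‖ := by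
  have hker : ∀ u : ℝ × ℝ, H u = 0 → u = 0 := by
    intro u h
    have hu : u = u.1 • ((1:ℝ),(0:ℝ)) + u.2 • ((0:ℝ),(1:ℝ)) := by
      ext <;> simp
    have e1 : H u (1,0) = 0 := by rw [h]; simp
    have e2 : H u (0,1) = 0 := by rw [h]; simp
    rw [hu, map_add, map_smul, map_smul] at e1 e2
    simp only [ContinuousLinearMap.add_apply, ContinuousLinearMap.coe_smul',
      Pi.smul_apply, smul_eq_mul] at e1 e2
    have k1 : u.1 * (H (1,0) (1,0) * H (0,1) (0,1) - H (1,0) (0,1) * H (0,1) (1,0))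
        = H (0,1) (0,1) * (u.1 * H (1,0) (1,0) + u.2 * H (0,1) (1,0))
          - H (0,1) (1,0) * (u.1 * H (1,0) (0,1) + u.2 * H (0,1) (0,1)) := by ring
    have k2 : u.2 * (H (1,0) (1,0) * H (0,1) (0,1) - H (1,0) (0,1) * H (0,1) (1,0))
        = H (1,0) (1,0) * (u.1 * H (1,0) (0,1) + u.2 * H (0,1) (0,1))
          - H (1,0) (0,1) * (u.1 * H (1,0) (1,0) + u.2 * H (0,1) (1,0)) := by ring
    rw [e1, e2] at k1 k2
    simp only [mul_zero, sub_zero, zero_sub, mul_eq_zero] at k1 k2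
    have h1 : u.1 = 0 := k1.resolve_right hdet
    have h2 : u.2 = 0 := k2.resolve_right hdet
    exact Prod.ext h1 h2
  have hne : ((1:ℝ),(0:ℝ)) ∈ Metric.sphere (0:ℝ×ℝ) 1 := by
    simp [Prod.norm_def]
  obtain ⟨u₀, hu₀S, hmin'⟩ := (isCompact_sphere (0:ℝ×ℝ) 1).exists_isMinOn ⟨_, hne⟩
    ((continuous_norm.comp H.continuous).continuousOn)
  have hmin : ∀ z ∈ Metric.sphere (0:ℝ×ℝ) 1, ‖H u₀‖ ≤ ‖H z‖ := fun z hz => hmin' hz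
  have hu₀n : ‖u₀‖ = 1 := mem_sphere_zero_iff_norm.1 hu₀S
  have hu₀ : u₀ ≠ 0 := by intro h; rw [h] at hu₀n; simp at hu₀n
  have hc : 0 < ‖H u₀‖ := by
    rw [norm_pos_iff]
    intro h; exact hu₀ (hker _ h)
  refine ⟨‖H u₀‖, hc, fun u => ?_⟩
  rcases eq_or_ne u 0 with rfl | hu
  · simp
  · have hn : ‖u‖ ≠ 0 := norm_ne_zero_iff.2 hu
    have h1 : (‖u‖⁻¹ • u) ∈ Metric.sphere (0:ℝ×ℝ) 1 := by
      rw [mem_sphere_zero_iff_norm, norm_smul, norm_inv, norm_norm, inv_mul_cancel₀ hn]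
    have h2 := hmin _ h1
    rw [map_smul] at h2
    have h3 : ‖(‖u‖⁻¹ : ℝ) • H u‖ ≤ ‖(‖u‖⁻¹ : ℝ)‖ * ‖H u‖ :=
      ContinuousLinearMap.opNorm_smul_le _ _
    rw [norm_inv, norm_norm] at h3
    replace h2 := h2.trans h3
    have hpos : (0:ℝ) < ‖u‖ := lt_of_le_of_ne (norm_nonneg u) (Ne.symm hn)
    calc ‖H u₀‖ * ‖u‖ ≤ (‖u‖⁻¹ * ‖H u‖) * ‖u‖ := by nlinarith
      _ = ‖H u‖ := by field_simp

set_option maxHeartbeats 4000000 in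
/-- If `p ∈ int D` is a local minimum of `f`, then `p` has a
neighbourhood `U` and there is a sufficiently large radius `r` such that for every
sufficiently large `n` there is exactly one grid vertex in `U` which is minimal within its
grid circle of radius `r`. -/
theorem unique_minimal_grid_vertex_near_local_minimum
    (a b : ℝ) (ha : 0 < a) (hb : 0 < b) (f : ℝ × ℝ → ℝ)
    (hf : ContDiff ℝ 3 f)
    (hfin : {p ∈ Icc (0 : ℝ) a ×ˢ Icc (0 : ℝ) b | IsStationaryPt f p}.Finite)
    (hinterior : {p ∈ Icc (0 : ℝ) a ×ˢ Icc (0 : ℝ) b | IsStationaryPt f p} ⊆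
      interior (Icc (0 : ℝ) a ×ˢ Icc (0 : ℝ) b))
    (hhess : ∀ p ∈ Icc (0 : ℝ) a ×ˢ Icc (0 : ℝ) b, IsStationaryPt f p → hessDet f p ≠ 0)
    (hnondeg : ∀ n i j l m : ℕ, 0 < n → i ≤ n → j ≤ n → l ≤ n → m ≤ n →
      (i, j) ≠ (l, m) → f (gridPt a b n i j) ≠ f (gridPt a b n l m))
    (p : ℝ × ℝ) (hp : p ∈ interior (Icc (0 : ℝ) a ×ˢ Icc (0 : ℝ) b))
    (hloc : IsLocalMin f p) :
    ∃ U ∈ nhds p, ∃ r : ℕ, ∃ N : ℕ, ∀ n : ℕ, N ≤ n →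
      ∃! ij : ℕ × ℕ, ij.1 ≤ n ∧ ij.2 ≤ n ∧ gridPt a b n ij.1 ij.2 ∈ U ∧
        MinimalInCircle f a b n ij.1 ij.2 r := by
  classical
  have hd : Differentiable ℝ f := hf.differentiable (by norm_num)
  have hg2 : ContDiff ℝ 2 (fderiv ℝ f) := hf.fderiv_right (by norm_num)
  have hgd : Differentiable ℝ (fderiv ℝ f) := hg2.differentiable (by norm_num)
  have hstat : fderiv ℝ f p = 0 := hloc.fderiv_eq_zero
  have hdet : hessDet f p ≠ 0 := hhess p (interior_subset hp) hstat
  set H := fderiv ℝ (fderiv ℝ f) p with hHdef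
  have hdet' : H (1,0) (1,0) * H (0,1) (0,1) - H (1,0) (0,1) * H (0,1) (1,0) ≠ 0 := by
    rw [hessDet_eq f hf p] at hdet; exact hdet
  obtain ⟨c, hc, hcH⟩ := exists_antilip H hdet'
  obtain ⟨M, t, htp, hlip⟩ :=
    ((hg2.contDiffAt (x := p)).of_le (by norm_num)).exists_lipschitzOnWith
  have hgH : HasFDerivAt (fderiv ℝ f) H p := (hgd p).hasFDerivAt
  have hlo : ∀ᶠ v in 𝓝 p, ‖fderiv ℝ f v - fderiv ℝ f p - H (v - p)‖ ≤ c/2 * ‖v - p‖ :=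
    hgH.isLittleO.def (by positivity)
  have hIoo : interior (Icc (0:ℝ) a ×ˢ Icc (0:ℝ) b) = Ioo (0:ℝ) a ×ˢ Ioo (0:ℝ) b := by
    rw [interior_prod_eq, interior_Icc, interior_Icc]
  have hpIoo : p ∈ Ioo (0:ℝ) a ×ˢ Ioo (0:ℝ) b := by rw [← hIoo]; exact hp
  have hV : (t ∩ ({v | ‖fderiv ℝ f v - fderiv ℝ f p - H (v - p)‖ ≤ c/2 * ‖v - p‖} ∩
      ({z | f p ≤ f z} ∩ Ioo (0:ℝ) a ×ˢ Ioo (0:ℝ) b))) ∈ 𝓝 p := by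
    refine Filter.inter_mem htp (Filter.inter_mem hlo (Filter.inter_mem hloc ?_))
    exact (isOpen_Ioo.prod isOpen_Ioo).mem_nhds hpIoo
  obtain ⟨ε, hε, hεsub⟩ := Metric.nhds_basis_closedBall.mem_iff.1 hV
  have hεt : Metric.closedBall p ε ⊆ t := fun z hz => (hεsub hz).1
  have hεlo : ∀ z ∈ Metric.closedBall p ε,
      ‖fderiv ℝ f z - fderiv ℝ f p - H (z - p)‖ ≤ c/2 * ‖z - p‖ := fun z hz => (hεsub hz).2.1
  have hεmin : ∀ z ∈ Metric.closedBall p ε, f p ≤ f z := fun z hz => (hεsub hz).2.2.1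
  have hεint : ∀ z ∈ Metric.closedBall p ε, z ∈ Ioo (0:ℝ) a ×ˢ Ioo (0:ℝ) b :=
    fun z hz => (hεsub hz).2.2.2
  -- gradient lower bound
  have hgrad : ∀ v ∈ Metric.closedBall p ε, c/2 * ‖v - p‖ ≤ ‖fderiv ℝ f v‖ := by
    intro v hv
    have h1 : ‖fderiv ℝ f v - H (v - p)‖ ≤ c/2 * ‖v - p‖ := by
      have := hεlo v hv
      rwa [hstat, sub_zero] at this
    have h2 := hcH (v - p)
    have h3 : ‖H (v - p)‖ ≤ ‖fderiv ℝ f v‖ + ‖fderiv ℝ f v - H (v - p)‖ := by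
      have h4 := norm_sub_le (fderiv ℝ f v) (fderiv ℝ f v - H (v - p))
      rw [sub_sub_cancel] at h4
      exact h4
    linarith
  -- strictness
  have hstrict : ∀ q ∈ Metric.closedBall p (ε/2), f q = f p → q = p := by
    intro q hq hfq
    have hql : IsLocalMin f q := by
      have hball : Metric.ball q (ε/2) ∈ 𝓝 q := Metric.ball_mem_nhds q (by positivity)
      filter_upwards [hball] with z hz
      have hz' : z ∈ Metric.closedBall p ε := by
        rw [Metric.mem_closedBall]
        have h1 : dist z q < ε/2 := Metric.mem_ball.1 hz
        have h2 : dist q p ≤ ε/2 := Metric.mem_closedBall.1 hq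
        calc dist z p ≤ dist z q + dist q p := dist_triangle _ _ _
          _ ≤ ε := by linarith
      rw [hfq]; exact hεmin z hz'
    have h0 : fderiv ℝ f q = 0 := hql.fderiv_eq_zero
    have hq' : q ∈ Metric.closedBall p ε :=
      Metric.closedBall_subset_closedBall (by linarith) hq
    have h1 := hgrad q hq'
    rw [h0, norm_zero] at h1
    have h2 : ‖q - p‖ ≤ 0 := by nlinarith [norm_nonneg (q - p)]
    have h3 : q - p = 0 := norm_le_zero_iff.1 h2
    exact sub_eq_zero.1 h3
  -- Taylor estimate
  have htaylor : ∀ v w : ℝ × ℝ, v ∈ Metric.closedBall p (ε/2) → ‖w‖ ≤ ε/2 →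
      f (v + w) ≤ f v + fderiv ℝ f v w + (M:ℝ) * ‖w‖^2 := by
    intro v w hv hw
    have hsub : Metric.closedBall v ‖w‖ ⊆ Metric.closedBall p ε := by
      intro x hx
      rw [Metric.mem_closedBall] at hx ⊢
      have := Metric.mem_closedBall.1 hv
      calc dist x p ≤ dist x v + dist v p := dist_triangle _ _ _
        _ ≤ ε := by linarith
    have hvmem : v ∈ Metric.closedBall v ‖w‖ := Metric.mem_closedBall_self (norm_nonneg w)
    have hbound : ∀ x ∈ Metric.closedBall v ‖w‖,
        ‖fderiv ℝ f x - fderiv ℝ f v‖ ≤ (M:ℝ) * ‖w‖ := by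
      intro x hx
      have h1 := hlip.dist_le_mul x (hεt (hsub hx)) v (hεt (hsub hvmem))
      rw [dist_eq_norm] at h1
      refine h1.trans ?_
      have h2 : dist x v ≤ ‖w‖ := Metric.mem_closedBall.1 hx
      exact mul_le_mul_of_nonneg_left h2 M.coe_nonneg
    have hy : v + w ∈ Metric.closedBall v ‖w‖ := by
      rw [Metric.mem_closedBall, dist_eq_norm, add_sub_cancel_left]
    have key := (convex_closedBall v ‖w‖).norm_image_sub_le_of_norm_fderiv_le'
      (fun x _ => hd x) hbound hvmem hy
    rw [add_sub_cancel_left] at key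
    have h3 : f (v + w) - f v - fderiv ℝ f v w ≤ (M:ℝ) * ‖w‖ * ‖w‖ :=
      (le_abs_self _).trans key
    nlinarith [sq_nonneg ‖w‖]
  -- constants
  have hab : (0:ℝ) < min a b := lt_min ha hb
  have habm : (0:ℝ) < max a b := lt_of_lt_of_le ha (le_max_left a b)
  set K₀ : ℝ := (M:ℝ) * (max a b)^2 / min a b with hK₀
  have hK₀0 : 0 ≤ K₀ := by positivity
  set K : ℝ := 2 * K₀ / c + 1 with hK
  have hK1 : (1:ℝ) ≤ K := by
    have : (0:ℝ) ≤ 2 * K₀ / c := by positivity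
    rw [hK]; linarith
  have hKpos : (0:ℝ) < K := by linarith
  clear_value K₀ K
  set r : ℕ := ⌈2 * K / min a b⌉₊ + 1 with hr
  have hr1 : 1 ≤ r := Nat.le_add_left 1 _
  have hrK : 2 * K / min a b ≤ (r:ℝ) := by
    have h1 := Nat.le_ceil (2 * K / min a b)
    have h2 : ((⌈2 * K / min a b⌉₊ : ℝ)) ≤ ((r:ℝ)) := by
      rw [hr]; push_cast; linarith
    linarith
  clear_value r
  -- descent
  have hdesc : ∀ n i j : ℕ, 0 < n → max a b / n ≤ ε/2 → i ≤ n → j ≤ n →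
      gridPt a b n i j ∈ Metric.closedBall p (ε/2) →
      MinimalInCircle f a b n i j r →
      ‖gridPt a b n i j - p‖ ≤ K / n := by
    intro n i j hn hstep hi hj hvmem hmin
    have hnR : (0:ℝ) < n := Nat.cast_pos.2 hn
    set v := gridPt a b n i j with hv
    have hvball : v ∈ Metric.closedBall p ε :=
      Metric.closedBall_subset_closedBall (by linarith) hvmem
    have hvint : ((i:ℝ) * a / n, (j:ℝ) * b / n) ∈ Ioo (0:ℝ) a ×ˢ Ioo (0:ℝ) b :=
      hεint v hvball
    rw [Set.mem_prod, Set.mem_Ioo, Set.mem_Ioo] at hvint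
    clear_value v
    have hv1 : (0:ℝ) < (i:ℝ) * a / n := hvint.1.1
    have hv2 : (i:ℝ) * a / n < a := hvint.1.2
    have hv3 : (0:ℝ) < (j:ℝ) * b / n := hvint.2.1
    have hv4 : (j:ℝ) * b / n < b := hvint.2.2
    have hi1 : 1 ≤ i := by
      rcases Nat.eq_zero_or_pos i with h | h
      · subst h; norm_num at hv1
      · exact h
    have hj1 : 1 ≤ j := by
      rcases Nat.eq_zero_or_pos j with h | h
      · subst h; norm_num at hv3
      · exact h
    have hin : i + 1 ≤ n := by
      have h1 : (i:ℝ) * a < a * n := by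
        rw [div_lt_iff₀ hnR] at hv2; linarith
      have h2 : (i:ℝ) < n := by nlinarith
      have : i < n := by exact_mod_cast h2
      omega
    have hjn : j + 1 ≤ n := by
      have h1 : (j:ℝ) * b < b * n := by
        rw [div_lt_iff₀ hnR] at hv4; linarith
      have h2 : (j:ℝ) < n := by nlinarith
      have : j < n := by exact_mod_cast h2
      omega
    set dx := fderiv ℝ f v (1, 0) with hdx
    set dy := fderiv ℝ f v (0, 1) with hdy
    set wx : ℝ := if 0 ≤ dx then -(a/n) else a/n with hwx
    set wy : ℝ := if 0 ≤ dy then -(b/n) else b/n with hwy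
    set i' : ℕ := if 0 ≤ dx then i - 1 else i + 1 with hi'
    set j' : ℕ := if 0 ≤ dy then j - 1 else j + 1 with hj'
    clear_value wx wy i' j'
    have hi'n : i' ≤ n := by rw [hi']; split <;> omega
    have hj'n : j' ≤ n := by rw [hj']; split <;> omega
    have hiabs : ((i:ℤ) - i').natAbs ≤ r := by
      rw [hi']; split <;> [skip; skip] <;> omega
    have hjabs : ((j:ℤ) - j').natAbs ≤ r := by
      rw [hj']; split <;> [skip; skip] <;> omega
    have hwxa : |wx| = a/n := by
      rw [hwx]; split
      · rw [abs_neg, abs_of_pos (div_pos ha hnR)]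
      · rw [abs_of_pos (div_pos ha hnR)]
    have hwyb : |wy| = b/n := by
      rw [hwy]; split
      · rw [abs_neg, abs_of_pos (div_pos hb hnR)]
      · rw [abs_of_pos (div_pos hb hnR)]
    have hmaxdiv : max (a/n) (b/n) = max a b / n := by
      rcases le_total a b with h | h
      · rw [max_eq_right h, max_eq_right (by gcongr : a/n ≤ b/n)]
      · rw [max_eq_left h, max_eq_left (by gcongr : b/n ≤ a/n)]
    have hw_norm : ‖((wx, wy) : ℝ × ℝ)‖ = max a b / n := by
      rw [Prod.norm_def]
      show max ‖wx‖ ‖wy‖ = _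
      rw [Real.norm_eq_abs, Real.norm_eq_abs, hwxa, hwyb, hmaxdiv]
    have hgrid : gridPt a b n i' j' = v + (wx, wy) := by
      have h1 : ((i':ℕ):ℝ) * a / n = (i:ℝ) * a / n + wx := by
        rw [hi', hwx]; split
        · rw [Nat.cast_sub hi1]; push_cast; field_simp; ring
        · push_cast; field_simp
      have h2 : ((j':ℕ):ℝ) * b / n = (j:ℝ) * b / n + wy := by
        rw [hj', hwy]; split
        · rw [Nat.cast_sub hj1]; push_cast; field_simp; ring
        · push_cast; field_simp
      rw [hv]
      show ((i':ℝ) * a / n, (j':ℝ) * b / n) = ((i:ℝ) * a / n, (j:ℝ) * b / n) + (wx, wy)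
      rw [Prod.mk_add_mk, Prod.mk.injEq]
      exact ⟨h1, h2⟩
    have hminapp : f v ≤ f (gridPt a b n i' j') := by
      rw [hv]
      exact hmin i' j' hi'n hj'n (max_le hiabs hjabs)
    have hwnorm' : ‖((wx, wy) : ℝ × ℝ)‖ ≤ ε/2 := by rw [hw_norm]; exact hstep
    have ht := htaylor v (wx, wy) hvmem hwnorm'
    rw [← hgrid] at ht
    have hgvw : fderiv ℝ f v (wx, wy) = wx * dx + wy * dy := by
      have e : ((wx, wy) : ℝ × ℝ) = wx • ((1:ℝ),(0:ℝ)) + wy • ((0:ℝ),(1:ℝ)) := by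
        ext <;> simp
      rw [e, map_add, map_smul, map_smul]
      simp [smul_eq_mul, hdx, hdy]
    have hwxdx : wx * dx = -(a/n * |dx|) := by
      rw [hwx]; split <;> rename_i h
      · rw [abs_of_nonneg h]; ring
      · rw [abs_of_neg (lt_of_not_ge h)]; ring
    have hwydy : wy * dy = -(b/n * |dy|) := by
      rw [hwy]; split <;> rename_i h
      · rw [abs_of_nonneg h]; ring
      · rw [abs_of_neg (lt_of_not_ge h)]; ring
    have hineq : a/n * |dx| + b/n * |dy| ≤ (M:ℝ) * (max a b / n)^2 := by
      rw [hgvw, hwxdx, hwydy, hw_norm] at ht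
      linarith
    have hopn : ‖fderiv ℝ f v‖ ≤ |dx| + |dy| := opnorm_le_abs (fderiv ℝ f v)
    have h5 : min a b / n * ‖fderiv ℝ f v‖ ≤ (M:ℝ) * (max a b)^2 / n^2 := by
      have h6 : min a b / n * ‖fderiv ℝ f v‖ ≤ min a b / n * (|dx| + |dy|) := by
        have : (0:ℝ) ≤ min a b / n := by positivity
        exact mul_le_mul_of_nonneg_left hopn this
      have h7 : min a b / n * (|dx| + |dy|) ≤ a/n * |dx| + b/n * |dy| := by
        have hma : min a b / n ≤ a / n := by gcongr; exact min_le_left a b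
        have hmb : min a b / n ≤ b / n := by gcongr; exact min_le_right a b
        have hdx0 : (0:ℝ) ≤ |dx| := abs_nonneg _
        have hdy0 : (0:ℝ) ≤ |dy| := abs_nonneg _
        nlinarith only [hma, hmb, hdx0, hdy0]
      have h8 : (M:ℝ) * (max a b / n)^2 = (M:ℝ) * (max a b)^2 / n^2 := by
        field_simp
      linarith
    have h5' : min a b / n * ‖fderiv ℝ f v‖ * (n:ℝ)^2 ≤ (M:ℝ) * (max a b)^2 := by
      rw [← le_div_iff₀ (by positivity : (0:ℝ) < (n:ℝ)^2)]
      exact h5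
    have h9 : ‖fderiv ℝ f v‖ ≤ K₀ / n := by
      rw [hK₀, div_div, le_div_iff₀ (by positivity : (0:ℝ) < min a b * n)]
      have e : min a b / n * ‖fderiv ℝ f v‖ * (n:ℝ)^2 = ‖fderiv ℝ f v‖ * (min a b * n) := by
        field_simp
      rw [e] at h5'
      exact h5'
    have h10 := hgrad v hvball
    have h11 : c/2 * ‖v - p‖ ≤ K₀ / n := le_trans h10 h9
    rw [hK]
    have h11' : c/2 * ‖v - p‖ * n ≤ K₀ := by
      rw [← le_div_iff₀ hnR]
      exact h11
    have h12 : ‖v - p‖ ≤ 2 * K₀ / c / n := by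
      rw [div_div, le_div_iff₀ (by positivity : (0:ℝ) < c * n)]
      nlinarith only [h11']
    refine h12.trans ?_
    gcongr
    linarith
  -- annulus minimum δ
  have hcomp : IsCompact (Metric.closedBall p (ε/2) \ Metric.ball p (ε/4)) :=
    (isCompact_closedBall p (ε/2)).diff Metric.isOpen_ball
  have hAne : ((p.1 + ε/2, p.2) : ℝ × ℝ) ∈
      Metric.closedBall p (ε/2) \ Metric.ball p (ε/4) := by
    have hdist : dist ((p.1 + ε/2, p.2) : ℝ × ℝ) p = ε/2 := by
      rw [dist_eq_norm]
      have e : ((p.1 + ε/2, p.2) : ℝ × ℝ) - p = (ε/2, 0) := by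
        ext <;> simp
      rw [e, Prod.norm_def]
      show max ‖(ε/2 : ℝ)‖ ‖(0:ℝ)‖ = ε/2
      rw [Real.norm_eq_abs, abs_of_pos (by positivity), norm_zero]
      exact max_eq_left (by positivity)
    constructor
    · rw [Metric.mem_closedBall, hdist]
    · rw [Metric.mem_ball, hdist]
      push_neg
      linarith
  obtain ⟨z₁, hz₁A, hz₁min⟩ := hcomp.exists_isMinOn ⟨_, hAne⟩ hf.continuous.continuousOn
  set δ := f z₁ - f p with hδ
  have hδpos : 0 < δ := by
    have hz₁ball : z₁ ∈ Metric.closedBall p ε :=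
      Metric.closedBall_subset_closedBall (by linarith) hz₁A.1
    have hge : f p ≤ f z₁ := hεmin z₁ hz₁ball
    rcases eq_or_lt_of_le hge with h | h
    · exfalso
      have := hstrict z₁ hz₁A.1 h.symm
      rw [this] at hz₁A
      exact hz₁A.2 (Metric.mem_ball_self (by positivity))
    · rw [hδ]; linarith
  -- continuity radius σ
  obtain ⟨σ, hσ, hσball⟩ := Metric.continuousAt_iff.1 hf.continuous.continuousAt δ hδpos
  -- choice of N
  set m₀ := min (σ/2) (ε/4) with hm₀
  have hm₀pos : 0 < m₀ := lt_min (by positivity) (by positivity)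
  obtain ⟨N₀, hN₀⟩ := exists_nat_ge (((r:ℝ)+1) * (max a b) / m₀)
  refine ⟨Metric.ball p (ε/4), Metric.ball_mem_nhds p (by positivity), r, N₀ + 1, ?_⟩
  intro n hn
  have hn0 : 0 < n := lt_of_lt_of_le (Nat.succ_pos N₀) hn
  have hnR : (0:ℝ) < n := Nat.cast_pos.2 hn0
  have hnN : (N₀:ℝ) ≤ n := by exact_mod_cast Nat.le_of_succ_le hn
  have hnbig : ((r:ℝ)+1) * (max a b) / m₀ ≤ n := hN₀.trans hnN
  have hkey : ((r:ℝ)+1) * (max a b) ≤ n * m₀ := by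
    rw [div_le_iff₀ hm₀pos] at hnbig; linarith
  have hr0 : (0:ℝ) ≤ (r:ℝ) := Nat.cast_nonneg r
  have hm₀le : m₀ ≤ ε/4 := by rw [hm₀]; exact min_le_right _ _
  have hm₀σ : m₀ ≤ σ/2 := by rw [hm₀]; exact min_le_left _ _
  have hstep : max a b / n ≤ m₀ := by
    rw [div_le_iff₀ hnR]
    nlinarith only [hkey, mul_nonneg hr0 habm.le, habm, hnR]
  have hstepε : max a b / n ≤ ε/4 := hstep.trans hm₀le
  have hstepσ : max a b / n ≤ σ/2 := hstep.trans hm₀σ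
  have hrstep : (r:ℝ) * (max a b) / n ≤ ε/4 := by
    have h1 : (r:ℝ) * (max a b) ≤ n * m₀ := by nlinarith only [hkey, habm]
    have h2 : n * m₀ ≤ n * (ε/4) := mul_le_mul_of_nonneg_left hm₀le hnR.le
    rw [div_le_iff₀ hnR]
    nlinarith only [h1, h2]
  -- nearest grid vertex to p
  have hp1 : 0 < p.1 := hpIoo.1.1
  have hp1a : p.1 < a := hpIoo.1.2
  have hp2 : 0 < p.2 := hpIoo.2.1
  have hp2b : p.2 < b := hpIoo.2.2
  set i₀ : ℕ := ⌊p.1 * n / a⌋₊ with hi₀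
  set j₀ : ℕ := ⌊p.2 * n / b⌋₊ with hj₀
  have hi₀n : i₀ ≤ n := by
    have h1 : p.1 * n / a < n := by
      rw [div_lt_iff₀ ha]
      nlinarith only [mul_lt_mul_of_pos_right hp1a hnR]
    exact le_of_lt ((Nat.floor_lt (by positivity)).2 h1)
  have hj₀n : j₀ ≤ n := by
    have h1 : p.2 * n / b < n := by
      rw [div_lt_iff₀ hb]
      nlinarith only [mul_lt_mul_of_pos_right hp2b hnR]
    exact le_of_lt ((Nat.floor_lt (by positivity)).2 h1)
  have hv₀1 : |(i₀:ℝ) * a / n - p.1| ≤ a/n := by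
    have h1 : (i₀:ℝ) ≤ p.1 * n / a := Nat.floor_le (by positivity)
    have h2 : p.1 * n / a < (i₀:ℝ) + 1 := Nat.lt_floor_add_one _
    rw [le_div_iff₀ ha] at h1
    rw [div_lt_iff₀ ha] at h2
    have h3 : (i₀:ℝ) * a / n ≤ p.1 := by
      rw [div_le_iff₀ hnR]; linarith only [h1]
    have h4 : p.1 ≤ (i₀:ℝ) * a / n + a/n := by
      rw [← add_div, le_div_iff₀ hnR]; nlinarith only [h2]
    rw [abs_le]; constructor <;> linarith
  have hv₀2 : |(j₀:ℝ) * b / n - p.2| ≤ b/n := by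
    have h1 : (j₀:ℝ) ≤ p.2 * n / b := Nat.floor_le (by positivity)
    have h2 : p.2 * n / b < (j₀:ℝ) + 1 := Nat.lt_floor_add_one _
    rw [le_div_iff₀ hb] at h1
    rw [div_lt_iff₀ hb] at h2
    have h3 : (j₀:ℝ) * b / n ≤ p.2 := by
      rw [div_le_iff₀ hnR]; linarith only [h1]
    have h4 : p.2 ≤ (j₀:ℝ) * b / n + b/n := by
      rw [← add_div, le_div_iff₀ hnR]; nlinarith only [h2]
    rw [abs_le]; constructor <;> linarith
  have hv₀p : dist (gridPt a b n i₀ j₀) p ≤ max a b / n := by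
    rw [Prod.dist_eq]
    apply max_le
    · show dist ((i₀:ℝ) * a / n) p.1 ≤ _
      rw [Real.dist_eq]
      refine hv₀1.trans ?_
      gcongr
      exact le_max_left a b
    · show dist ((j₀:ℝ) * b / n) p.2 ≤ _
      rw [Real.dist_eq]
      refine hv₀2.trans ?_
      gcongr
      exact le_max_right a b
  -- the finite set of candidate vertices
  set T : Finset (ℕ × ℕ) := (Finset.range (n+1) ×ˢ Finset.range (n+1)).filter
    (fun ij => gridPt a b n ij.1 ij.2 ∈ Metric.closedBall p (ε/2)) with hT
  have hv₀T : (i₀, j₀) ∈ T := by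
    rw [hT, Finset.mem_filter, Finset.mem_product, Finset.mem_range, Finset.mem_range]
    refine ⟨⟨Nat.lt_succ_of_le hi₀n, Nat.lt_succ_of_le hj₀n⟩, ?_⟩
    rw [Metric.mem_closedBall]
    refine hv₀p.trans (hstepε.trans (by linarith))
  obtain ⟨⟨i, j⟩, hijT, hijmin⟩ :=
    T.exists_min_image (fun ij => f (gridPt a b n ij.1 ij.2)) ⟨_, hv₀T⟩
  have hijT' := Finset.mem_filter.1 hijT
  have hiT := Finset.mem_product.1 hijT'.1
  have hi : i ≤ n := Nat.lt_succ_iff.1 (Finset.mem_range.1 hiT.1)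
  have hj : j ≤ n := Nat.lt_succ_iff.1 (Finset.mem_range.1 hiT.2)
  have hqmem : gridPt a b n i j ∈ Metric.closedBall p (ε/2) := hijT'.2
  -- f q < f p + δ
  have hfq : f (gridPt a b n i j) < f p + δ := by
    have h1 : f (gridPt a b n i j) ≤ f (gridPt a b n i₀ j₀) := hijmin (i₀, j₀) hv₀T
    have h2 : dist (gridPt a b n i₀ j₀) p < σ :=
      lt_of_le_of_lt (hv₀p.trans hstepσ) (by linarith)
    have h3 := hσball h2
    rw [Real.dist_eq, abs_lt] at h3
    linarith only [h1, h3.1, h3.2]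
  -- q in the small ball
  have hqU : gridPt a b n i j ∈ Metric.ball p (ε/4) := by
    by_contra h
    have hA : gridPt a b n i j ∈ Metric.closedBall p (ε/2) \ Metric.ball p (ε/4) := ⟨hqmem, h⟩
    have h1 := hz₁min hA
    rw [hδ] at hfq
    have h1' : f z₁ ≤ f (gridPt a b n i j) := h1
    linarith only [h1', hfq]
  -- q is minimal in its circle
  have hqmin : MinimalInCircle f a b n i j r := by
    intro l m hl hm hlm
    have h1 : ((i:ℤ) - l).natAbs ≤ r := le_trans (le_max_left _ _) hlm
    have h2 : ((j:ℤ) - m).natAbs ≤ r := le_trans (le_max_right _ _) hlm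
    have habs1 : |(i:ℝ) - l| ≤ r := by
      have h3 : |(i:ℤ) - l| ≤ (r:ℤ) := by
        rw [Int.abs_eq_natAbs]; exact_mod_cast h1
      have h4 : ((|(i:ℤ) - l| : ℤ) : ℝ) ≤ ((r:ℤ) : ℝ) := by exact_mod_cast h3
      push_cast at h4
      exact h4
    have habs2 : |(j:ℝ) - m| ≤ r := by
      have h3 : |(j:ℤ) - m| ≤ (r:ℤ) := by
        rw [Int.abs_eq_natAbs]; exact_mod_cast h2
      have h4 : ((|(j:ℤ) - m| : ℤ) : ℝ) ≤ ((r:ℤ) : ℝ) := by exact_mod_cast h3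
      push_cast at h4
      exact h4
    have hdistq : dist (gridPt a b n l m) (gridPt a b n i j) ≤ (r:ℝ) * (max a b) / n := by
      rw [Prod.dist_eq]
      apply max_le
      · show dist ((l:ℝ) * a / n) ((i:ℝ) * a / n) ≤ _
        rw [Real.dist_eq]
        have e : (l:ℝ) * a / n - (i:ℝ) * a / n = ((l:ℝ) - i) * (a/n) := by ring
        rw [e, abs_mul, abs_of_pos (div_pos ha hnR)]
        have h5 : |(l:ℝ) - i| ≤ r := by rw [abs_sub_comm]; exact habs1
        calc |(l:ℝ) - i| * (a/n) ≤ (r:ℝ) * (a/n) := by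
              exact mul_le_mul_of_nonneg_right h5 (by positivity)
          _ ≤ (r:ℝ) * (max a b) / n := by
              rw [mul_div_assoc]
              gcongr
              exact le_max_left a b
      · show dist ((m:ℝ) * b / n) ((j:ℝ) * b / n) ≤ _
        rw [Real.dist_eq]
        have e : (m:ℝ) * b / n - (j:ℝ) * b / n = ((m:ℝ) - j) * (b/n) := by ring
        rw [e, abs_mul, abs_of_pos (div_pos hb hnR)]
        have h5 : |(m:ℝ) - j| ≤ r := by rw [abs_sub_comm]; exact habs2
        calc |(m:ℝ) - j| * (b/n) ≤ (r:ℝ) * (b/n) := by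
              exact mul_le_mul_of_nonneg_right h5 (by positivity)
          _ ≤ (r:ℝ) * (max a b) / n := by
              rw [mul_div_assoc]
              gcongr
              exact le_max_right a b
    have hmem : gridPt a b n l m ∈ Metric.closedBall p (ε/2) := by
      rw [Metric.mem_closedBall]
      have h6 : dist (gridPt a b n i j) p < ε/4 := Metric.mem_ball.1 hqU
      calc dist (gridPt a b n l m) p
          ≤ dist (gridPt a b n l m) (gridPt a b n i j) + dist (gridPt a b n i j) p :=
            dist_triangle _ _ _
        _ ≤ ε/4 + ε/4 := add_le_add (hdistq.trans hrstep) (le_of_lt h6)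
        _ ≤ ε/2 := by linarith
    have hlmT : (l, m) ∈ T := by
      rw [hT, Finset.mem_filter, Finset.mem_product, Finset.mem_range, Finset.mem_range]
      exact ⟨⟨Nat.lt_succ_of_le hl, Nat.lt_succ_of_le hm⟩, hmem⟩
    exact hijmin (l, m) hlmT
  -- existence and uniqueness
  refine ⟨(i, j), ⟨hi, hj, hqU, hqmin⟩, ?_⟩
  rintro ⟨l, m⟩ ⟨hl, hm, hlmU, hlmmin⟩
  have hstep2 : max a b / n ≤ ε/2 := hstepε.trans (by linarith)
  have hlmmem : gridPt a b n l m ∈ Metric.closedBall p (ε/2) :=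
    Metric.closedBall_subset_closedBall (by linarith) (Metric.ball_subset_closedBall hlmU)
  have hd1 : ‖gridPt a b n l m - p‖ ≤ K / n := hdesc n l m hn0 hstep2 hl hm hlmmem hlmmin
  have hd2 : ‖gridPt a b n i j - p‖ ≤ K / n := hdesc n i j hn0 hstep2 hi hj hqmem hqmin
  have hclose : ‖gridPt a b n l m - gridPt a b n i j‖ ≤ 2 * K / n := by
    have e : gridPt a b n l m - gridPt a b n i j
        = (gridPt a b n l m - p) - (gridPt a b n i j - p) := by abel
    rw [e]
    calc ‖(gridPt a b n l m - p) - (gridPt a b n i j - p)‖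
        ≤ ‖gridPt a b n l m - p‖ + ‖gridPt a b n i j - p‖ := norm_sub_le _ _
      _ ≤ 2 * K / n := by rw [two_mul, add_div]; exact add_le_add hd1 hd2
  have hfst : |(l:ℝ) * a / n - (i:ℝ) * a / n| ≤ 2 * K / n := by
    have h1 : ‖(gridPt a b n l m - gridPt a b n i j).1‖ ≤
        ‖gridPt a b n l m - gridPt a b n i j‖ := norm_fst_le _
    have e : (gridPt a b n l m - gridPt a b n i j).1 = (l:ℝ) * a / n - (i:ℝ) * a / n := rfl
    rw [e, Real.norm_eq_abs] at h1
    linarith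
  have hsnd : |(m:ℝ) * b / n - (j:ℝ) * b / n| ≤ 2 * K / n := by
    have h1 : ‖(gridPt a b n l m - gridPt a b n i j).2‖ ≤
        ‖gridPt a b n l m - gridPt a b n i j‖ := norm_snd_le _
    have e : (gridPt a b n l m - gridPt a b n i j).2 = (m:ℝ) * b / n - (j:ℝ) * b / n := rfl
    rw [e, Real.norm_eq_abs] at h1
    linarith
  have hli : ((l:ℤ) - i).natAbs ≤ r := by
    have e : (l:ℝ) * a / n - (i:ℝ) * a / n = ((l:ℝ) - i) * (a/n) := by ring
    rw [e, abs_mul, abs_of_pos (div_pos ha hnR)] at hfst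
    have h2 : |(l:ℝ) - i| ≤ 2 * K / a := by
      rw [le_div_iff₀ ha]
      have h2a := mul_le_mul_of_nonneg_right hfst hnR.le
      have e1 : |(l:ℝ) - i| * (a/n) * n = |(l:ℝ) - i| * a := by field_simp
      have e2 : 2 * K / n * n = 2 * K := by field_simp
      rw [e1, e2] at h2a
      exact h2a
    have h3 : 2 * K / a ≤ 2 * K / min a b :=
      div_le_div_of_nonneg_left (by linarith only [hKpos]) hab (min_le_left a b)
    have h4 : |(l:ℝ) - i| ≤ (r:ℝ) := h2.trans (h3.trans hrK)
    have h5 : |(l:ℤ) - i| ≤ (r:ℤ) := by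
      have h6 : ((|(l:ℤ) - i| : ℤ) : ℝ) ≤ ((r:ℤ) : ℝ) := by push_cast; exact h4
      exact_mod_cast h6
    rw [Int.abs_eq_natAbs] at h5
    exact_mod_cast h5
  have hmj : ((m:ℤ) - j).natAbs ≤ r := by
    have e : (m:ℝ) * b / n - (j:ℝ) * b / n = ((m:ℝ) - j) * (b/n) := by ring
    rw [e, abs_mul, abs_of_pos (div_pos hb hnR)] at hsnd
    have h2 : |(m:ℝ) - j| ≤ 2 * K / b := by
      rw [le_div_iff₀ hb]
      have h2a := mul_le_mul_of_nonneg_right hsnd hnR.le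
      have e1 : |(m:ℝ) - j| * (b/n) * n = |(m:ℝ) - j| * b := by field_simp
      have e2 : 2 * K / n * n = 2 * K := by field_simp
      rw [e1, e2] at h2a
      exact h2a
    have h3 : 2 * K / b ≤ 2 * K / min a b :=
      div_le_div_of_nonneg_left (by linarith only [hKpos]) hab (min_le_right a b)
    have h4 : |(m:ℝ) - j| ≤ (r:ℝ) := h2.trans (h3.trans hrK)
    have h5 : |(m:ℤ) - j| ≤ (r:ℤ) := by
      have h6 : ((|(m:ℤ) - j| : ℤ) : ℝ) ≤ ((r:ℤ) : ℝ) := by push_cast; exact h4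
      exact_mod_cast h6
    rw [Int.abs_eq_natAbs] at h5
    exact_mod_cast h5
  have hle1 : f (gridPt a b n i j) ≤ f (gridPt a b n l m) :=
    hqmin l m hl hm (max_le (by omega) (by omega))
  have hle2 : f (gridPt a b n l m) ≤ f (gridPt a b n i j) :=
    hlmmin i j hi hj (max_le (by omega) (by omega))
  by_contra hne
  exact hnondeg n l m i j hn0 hl hm hi hj (by simpa using hne)
    (le_antisymm hle2 hle1)
end
end
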